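/- arXiv:2005.01083 — 6 statements merged into one kernel-verified Lean document; each statement's English description precedes it below -/
import Mathlib

section
/- Every incoherent operation acting on a single qutrit admits a Kraus decomposition with at most 32 incoherent Kraus operators. That is, if Φ is a completely positive trace-preserving map on M₃(ℂ) admitting a Kraus representation Φ(ρ) = ∑ₙ Kₙ ρ Kₙ† with ∑ₙ Kₙ† Kₙ = I in which every Kₙ is incoherent, then there exist incoherent 3×3 complex matrices L₁, …, L₃₂ with ∑ⱼ₌₁³² Lⱼ† Lⱼ = I such that Φ(ρ) = ∑ⱼ₌₁³² Lⱼ ρ Lⱼ† for all ρ ∈ M₃(ℂ). -/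
open Matrix

/-- A matrix is an incoherent Kraus operator if each column contains at most
one nonzero entry. -/
def IsIncoherentKraus {d : ℕ} (K : Matrix (Fin d) (Fin d) ℂ) : Prop :=
  ∀ j i₁ i₂, K i₁ j ≠ 0 → K i₂ j ≠ 0 → i₁ = i₂

namespace QutritIO
noncomputable section

abbrev Mat := Matrix (Fin 3) (Fin 3) ℂ
abbrev T3 := Fin 3 × Fin 3 × Fin 3
abbrev F2 := Fin 3 × Fin 3

def pat (t : T3) : Fin 3 → Fin 3 := fun j => if j = 0 then t.1 else if j = 1 then t.2.1 else t.2.2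

def op (g : Fin 3 → Fin 3) (c : Fin 3 → ℂ) : Mat :=
  Matrix.of fun i j => (if g j = i then (1:ℂ) else 0) * c j

def act (g : Fin 3 → Fin 3) (c : Fin 3 → ℂ) (ρ : Mat) : Mat := op g c * ρ * (op g c)ᴴ

def cact (g : Fin 3 → Fin 3) (G : Fin 3 → Fin 3 → ℂ) (ρ : Mat) : Mat :=
  Matrix.of fun i i' => ∑ j : Fin 3, ∑ j' : Fin 3,
    (if g j = i then (1:ℂ) else 0) * (if g j' = i' then (1:ℂ) else 0) * G j j' * ρ j j'

def gramS {ι : Type} (s : Finset ι) (c : ι → Fin 3 → ℂ) : Fin 3 → Fin 3 → ℂ :=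
  fun j j' => ∑ i ∈ s, c i j * star (c i j')

def rank1 (v : Fin 3 → ℂ) : Fin 3 → Fin 3 → ℂ := fun j j' => v j * star (v j')

def IsGram (G : Fin 3 → Fin 3 → ℂ) : Prop :=
  ∃ (ι : Type) (_ : Fintype ι) (c : ι → Fin 3 → ℂ), ∀ j j', G j j' = ∑ i, c i j * star (c i j')

lemma op_incoherent (g : Fin 3 → Fin 3) (c : Fin 3 → ℂ) : IsIncoherentKraus (op g c) := by
  intro j i₁ i₂ h1 h2
  have e1 : g j = i₁ := by
    by_contra hne
    simp [op, hne] at h1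
  have e2 : g j = i₂ := by
    by_contra hne
    simp [op, hne] at h2
  rw [← e1, ← e2]

lemma op_congr {g g' : Fin 3 → Fin 3} (c : Fin 3 → ℂ) (h : ∀ j, c j ≠ 0 → g j = g' j) :
    op g c = op g' c := by
  ext i j
  by_cases hc : c j = 0
  · simp [op, hc]
  · rw [op, op]; simp only [Matrix.of_apply]; rw [h j hc]

lemma act_congr {g g' : Fin 3 → Fin 3} (c : Fin 3 → ℂ) (h : ∀ j, c j ≠ 0 → g j = g' j)
    (ρ : Mat) : act g c ρ = act g' c ρ := by
  unfold act
  rw [op_congr c h]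

lemma act_zero (g : Fin 3 → Fin 3) (c : Fin 3 → ℂ) (h : ∀ j, c j = 0) (ρ : Mat) :
    act g c ρ = 0 := by
  have : op g c = 0 := by ext i j; simp [op, h j]
  simp [act, this]

lemma act_op (g : Fin 3 → Fin 3) (c : Fin 3 → ℂ) (ρ : Mat) :
    act g c ρ = cact g (rank1 c) ρ := by
  ext i i'
  simp only [act, cact, Matrix.mul_apply, Matrix.conjTranspose_apply, Matrix.of_apply]
  calc ∑ x : Fin 3, (∑ j : Fin 3, op g c i j * ρ j x) * star (op g c i' x)
      = ∑ x : Fin 3, ∑ j : Fin 3, op g c i j * ρ j x * star (op g c i' x) := by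
        apply Finset.sum_congr rfl; intro x _; rw [Finset.sum_mul]
    _ = ∑ j : Fin 3, ∑ x : Fin 3, op g c i j * ρ j x * star (op g c i' x) := Finset.sum_comm
    _ = ∑ j : Fin 3, ∑ j' : Fin 3,
        (if g j = i then (1:ℂ) else 0) * (if g j' = i' then (1:ℂ) else 0) * rank1 c j j' * ρ j j' := by
        apply Finset.sum_congr rfl; intro j _
        apply Finset.sum_congr rfl; intro x _
        have hs : star (op g c i' x) = (if g x = i' then (1:ℂ) else 0) * star (c x) := by
          simp only [op, Matrix.of_apply]; split_ifs <;> simp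
        rw [hs]
        simp only [op, Matrix.of_apply, rank1]
        ring

lemma cact_add (g : Fin 3 → Fin 3) (G H : Fin 3 → Fin 3 → ℂ) (ρ : Mat) :
    cact g (fun j j' => G j j' + H j j') ρ = cact g G ρ + cact g H ρ := by
  ext i i'
  simp only [cact, Matrix.of_apply, Matrix.add_apply, ← Finset.sum_add_distrib]
  apply Finset.sum_congr rfl; intro j _
  apply Finset.sum_congr rfl; intro j' _
  ring

lemma cact_sumFinset {ι : Type*} (s : Finset ι) (g : Fin 3 → Fin 3) (H : ι → Fin 3 → Fin 3 → ℂ)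
    (ρ : Mat) :
    cact g (fun j j' => ∑ i ∈ s, H i j j') ρ = ∑ i ∈ s, cact g (H i) ρ := by
  ext i i'
  simp only [cact, Matrix.of_apply, Matrix.sum_apply]
  have step : ∀ j j' : Fin 3,
      ((if g j = i then (1:ℂ) else 0) * (if g j' = i' then (1:ℂ) else 0) * (∑ x ∈ s, H x j j')) * ρ j j'
        = ∑ x ∈ s, ((if g j = i then (1:ℂ) else 0) * (if g j' = i' then (1:ℂ) else 0) * H x j j') * ρ j j' := by
    intro j j'
    rw [Finset.mul_sum, Finset.sum_mul]
  calc ∑ j : Fin 3, ∑ j' : Fin 3,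
        ((if g j = i then (1:ℂ) else 0) * (if g j' = i' then (1:ℂ) else 0) * (∑ x ∈ s, H x j j')) * ρ j j'
      = ∑ j : Fin 3, ∑ j' : Fin 3, ∑ x ∈ s,
        ((if g j = i then (1:ℂ) else 0) * (if g j' = i' then (1:ℂ) else 0) * H x j j') * ρ j j' := by
        exact Finset.sum_congr rfl fun j _ => Finset.sum_congr rfl fun j' _ => step j j'
    _ = ∑ j : Fin 3, ∑ x ∈ s, ∑ j' : Fin 3,
        ((if g j = i then (1:ℂ) else 0) * (if g j' = i' then (1:ℂ) else 0) * H x j j') * ρ j j' := by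
        exact Finset.sum_congr rfl fun j _ => Finset.sum_comm
    _ = ∑ x ∈ s, ∑ j : Fin 3, ∑ j' : Fin 3,
        ((if g j = i then (1:ℂ) else 0) * (if g j' = i' then (1:ℂ) else 0) * H x j j') * ρ j j' := Finset.sum_comm

lemma sum_act_op {ι : Type} (s : Finset ι) (g : Fin 3 → Fin 3) (c : ι → Fin 3 → ℂ) (ρ : Mat) :
    ∑ i ∈ s, act g (c i) ρ = cact g (gramS s c) ρ := by
  have h : gramS s c = fun j j' => ∑ i ∈ s, rank1 (c i) j j' := rfl
  rw [h, cact_sumFinset]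
  apply Finset.sum_congr rfl
  intro i _
  exact act_op g (c i) ρ

lemma cact_congr (g : Fin 3 → Fin 3) {G H : Fin 3 → Fin 3 → ℂ} (h : ∀ j j', G j j' = H j j')
    (ρ : Mat) : cact g G ρ = cact g H ρ := by
  have : G = H := funext fun j => funext fun j' => h j j'
  rw [this]

lemma cact_gram3 (g : Fin 3 → Fin 3) (u : Fin 3 → Fin 3 → ℂ) (ρ : Mat) :
    cact g (fun j j' => ∑ k : Fin 3, u k j * star (u k j')) ρ
      = act g (u 0) ρ + act g (u 1) ρ + act g (u 2) ρ := by
  have h1 : (fun j j' => ∑ k : Fin 3, u k j * star (u k j')) = gramS Finset.univ u := rfl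
  rw [h1, ← sum_act_op, Fin.sum_univ_three]

lemma sum_mul_star_self_eq_zero {ι : Type*} [Fintype ι] (f : ι → ℂ)
    (h : ∑ i, f i * star (f i) = 0) : ∀ i, f i = 0 := by
  have h1 : ∑ i, f i * star (f i) = ((∑ i, Complex.normSq (f i) : ℝ) : ℂ) := by
    push_cast
    exact Finset.sum_congr rfl fun i _ => by
      rw [Complex.star_def, Complex.mul_conj]
  rw [h1] at h
  have h2 : ∑ i, Complex.normSq (f i) = 0 := by exact_mod_cast h
  intro i
  have := (Finset.sum_eq_zero_iff_of_nonneg (fun i _ => Complex.normSq_nonneg (f i))).mp h2 i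
    (Finset.mem_univ i)
  exact Complex.normSq_eq_zero.mp this

lemma elim {G : Fin 3 → Fin 3 → ℂ} (hG : IsGram G) (a : Fin 3) :
    ∃ (u : Fin 3 → ℂ) (G' : Fin 3 → Fin 3 → ℂ), IsGram G' ∧
      (∀ j j', G j j' = u j * star (u j') + G' j j') ∧
      (∀ j, G' a j = 0) ∧ (∀ j, G' j a = 0) ∧
      (∀ j, G j j = 0 → u j = 0) ∧
      (∀ j, G j j = 0 → ∀ j', G' j j' = 0 ∧ G' j' j = 0) := by
  classical
  obtain ⟨ι, hι, c, hc⟩ := hG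
  letI := hι
  have key0 : ∀ j, G j j = 0 → ∀ i, c i j = 0 := by
    intro j hj
    exact sum_mul_star_self_eq_zero (fun i => c i j) ((hc j j).symm.trans hj)
  have hGzero : ∀ j, (∀ i, c i j = 0) → ∀ j', G j j' = 0 ∧ G j' j = 0 := by
    intro j hcj j'
    constructor
    · rw [hc]; exact Finset.sum_eq_zero fun i _ => by rw [hcj i, zero_mul]
    · rw [hc]; exact Finset.sum_eq_zero fun i _ => by rw [hcj i, star_zero, mul_zero]
  have hherm : ∀ j j', star (G j j') = G j' j := by
    intro j j'
    rw [hc, hc]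
    rw [star_sum]
    refine Finset.sum_congr rfl fun i _ => ?_
    rw [star_mul', star_star, mul_comm]
  set s : ℝ := ∑ i, Complex.normSq (c i a) with hs_def
  have hGaa : G a a = (s : ℂ) := by
    rw [hc, hs_def]
    push_cast
    refine Finset.sum_congr rfl fun i _ => ?_
    rw [Complex.star_def, Complex.mul_conj]
  by_cases hs : s = 0
  · have hca : ∀ i, c i a = 0 := by
      intro i
      have := (Finset.sum_eq_zero_iff_of_nonneg
        (fun i _ => Complex.normSq_nonneg (c i a))).mp (hs_def ▸ hs) i (Finset.mem_univ i)
      exact Complex.normSq_eq_zero.mp this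
    refine ⟨0, G, ⟨ι, hι, c, hc⟩, ?_, ?_, ?_, ?_, ?_⟩
    · intro j j'; simp
    · intro j; exact (hGzero a hca j).1
    · intro j; exact (hGzero a hca j).2
    · intro j _; rfl
    · intro j hj; exact hGzero j (key0 j hj)
  · have hsnn : 0 ≤ s := Finset.sum_nonneg fun i _ => Complex.normSq_nonneg _
    have hspos : 0 < s := lt_of_le_of_ne hsnn (Ne.symm hs)
    set r : ℝ := Real.sqrt s with hr_def
    have hr0 : (r : ℂ) ≠ 0 := by
      simp only [ne_eq, Complex.ofReal_eq_zero]
      exact ne_of_gt (Real.sqrt_pos.mpr hspos)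
    have hrr : (r : ℂ) * (r : ℂ) = (s : ℂ) := by
      rw [← Complex.ofReal_mul, Real.mul_self_sqrt hsnn]
    have hs0 : (s : ℂ) ≠ 0 := by exact_mod_cast hs
    have hstar_s : star ((s : ℂ)) = (s : ℂ) := by
      rw [Complex.star_def, Complex.conj_ofReal]
    have hstar_r : star ((r : ℂ)) = (r : ℂ) := by
      rw [Complex.star_def, Complex.conj_ofReal]
    set X : Fin 3 → ℂ := fun j => G j a / (s : ℂ) with hX_def
    set u : Fin 3 → ℂ := fun j => G j a / (r : ℂ) with hu_def
    set c' : ι → Fin 3 → ℂ := fun i j => c i j - c i a * X j with hc'_def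
    set G' : Fin 3 → Fin 3 → ℂ := fun j j' => ∑ i, c' i j * star (c' i j') with hG'_def
    have hstarX : ∀ j', star (X j') = G a j' / (s : ℂ) := by
      intro j'
      rw [hX_def]
      simp only
      rw [star_div₀, hstar_s, hherm]
    have hsum3 : ∀ j j', G' j j' = G j j' - star (X j') * G j a - X j * G a j'
        + X j * star (X j') * G a a := by
      intro j j'
      have per : ∀ i, c' i j * star (c' i j')
          = c i j * star (c i j') - star (X j') * (c i j * star (c i a))
            - X j * (c i a * star (c i j')) + X j * star (X j') * (c i a * star (c i a)) := by
        intro i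
        rw [hc'_def]
        simp only
        rw [star_sub, star_mul']
        ring
      rw [hG'_def]
      simp only
      calc ∑ i, c' i j * star (c' i j')
          = ∑ i, (c i j * star (c i j') - star (X j') * (c i j * star (c i a))
            - X j * (c i a * star (c i j')) + X j * star (X j') * (c i a * star (c i a))) :=
            Finset.sum_congr rfl fun i _ => per i
        _ = ((∑ i, c i j * star (c i j')) - star (X j') * (∑ i, c i j * star (c i a))
            - X j * (∑ i, c i a * star (c i j'))
            + X j * star (X j') * (∑ i, c i a * star (c i a))) := by
            rw [Finset.sum_add_distrib, Finset.sum_sub_distrib, Finset.sum_sub_distrib,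
              ← Finset.mul_sum, ← Finset.mul_sum, ← Finset.mul_sum]
        _ = G j j' - star (X j') * G j a - X j * G a j' + X j * star (X j') * G a a := by
            rw [← hc, ← hc, ← hc, ← hc]
    have hE0 : ∀ j j', G' j j' = G j j' - G j a * G a j' / (s : ℂ) := by
      intro j j'
      rw [hsum3 j j', hstarX j', hGaa, hX_def]
      simp only
      field_simp
      ring
    have hugood : ∀ j j', u j * star (u j') = G j a * G a j' / (s : ℂ) := by
      intro j j'
      rw [hu_def]
      simp only
      rw [star_div₀, hstar_r, hherm]
      rw [div_mul_div_comm, hrr]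
    refine ⟨u, G', ⟨ι, hι, c', fun j j' => rfl⟩, ?_, ?_, ?_, ?_, ?_⟩
    · intro j j'
      rw [hE0 j j', hugood j j']
      ring
    · intro j
      rw [hE0 a j, hGaa]
      field_simp; ring
    · intro j
      rw [hE0 j a, hGaa]
      field_simp; ring
    · intro j hj
      have hcj := key0 j hj
      have hja : G j a = 0 := (hGzero j hcj a).1
      rw [hu_def]
      simp only
      rw [hja, zero_div]
    · intro j hj j'
      have hcj := key0 j hj
      constructor
      · rw [hE0 j j', (hGzero j hcj j').1, (hGzero j hcj a).1]
        simp
      · rw [hE0 j' j, (hGzero j hcj j').2, (hGzero j hcj a).2]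
        simp

lemma chol {G : Fin 3 → Fin 3 → ℂ} (hG : IsGram G) (e : Equiv.Perm (Fin 3)) :
    ∃ u : Fin 3 → Fin 3 → ℂ,
      (∀ j j', G j j' = ∑ k : Fin 3, u k j * star (u k j')) ∧
      u 1 (e 0) = 0 ∧ u 2 (e 0) = 0 ∧ u 2 (e 1) = 0 ∧
      (∀ j, G j j = 0 → ∀ k, u k j = 0) := by
  obtain ⟨u0, G1, hG1, hid1, hrow1, hcol1, hz1, hzz1⟩ := elim hG (e 0)
  obtain ⟨u1, G2, hG2, hid2, hrow2, hcol2, hz2, hzz2⟩ := elim hG1 (e 1)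
  obtain ⟨u2, G3, hG3, hid3, hrow3, hcol3, hz3, hzz3⟩ := elim hG2 (e 2)
  have hG1e0 : G1 (e 0) (e 0) = 0 := hrow1 (e 0)
  have hG2e0 : ∀ j, G2 (e 0) j = 0 ∧ G2 j (e 0) = 0 := hzz2 (e 0) hG1e0
  have hG2e1 : G2 (e 1) (e 1) = 0 := hrow2 (e 1)
  have hG3e0 : ∀ j, G3 (e 0) j = 0 ∧ G3 j (e 0) = 0 := hzz3 (e 0) (hG2e0 (e 0)).1
  have hG3e1 : ∀ j, G3 (e 1) j = 0 ∧ G3 j (e 1) = 0 := hzz3 (e 1) hG2e1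
  have hG3 : ∀ j j', G3 j j' = 0 := by
    intro j j'
    have hcases : ∀ k : Fin 3, G3 j (e k) = 0 := by
      intro k
      fin_cases k
      · exact (hG3e0 j).2
      · exact (hG3e1 j).2
      · exact hcol3 j
    have := hcases (e.symm j')
    rwa [e.apply_symm_apply] at this
  refine ⟨![u0, u1, u2], ?_, ?_, ?_, ?_, ?_⟩
  · intro j j'
    rw [Fin.sum_univ_three]
    simp only [Matrix.cons_val_zero, Matrix.cons_val_one, Matrix.head_cons,
      Matrix.cons_val_two, Matrix.tail_cons]
    rw [hid1 j j', hid2 j j', hid3 j j', hG3 j j']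
    ring
  · simp only [Matrix.cons_val_one, Matrix.head_cons]
    exact hz2 (e 0) hG1e0
  · simp only [Matrix.cons_val_two, Matrix.tail_cons, Matrix.head_cons]
    exact hz3 (e 0) (hG2e0 (e 0)).1
  · simp only [Matrix.cons_val_two, Matrix.tail_cons, Matrix.head_cons]
    exact hz3 (e 1) hG2e1
  · intro j hj
    have hsum : ∑ k : Fin 3, ![u0, u1, u2] k j * star (![u0, u1, u2] k j) = 0 := by
      have h2 : G j j = ∑ k : Fin 3, ![u0, u1, u2] k j * star (![u0, u1, u2] k j) := by
        rw [Fin.sum_univ_three]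
        simp only [Matrix.cons_val_zero, Matrix.cons_val_one, Matrix.head_cons,
          Matrix.cons_val_two, Matrix.tail_cons]
        rw [hid1 j j, hid2 j j, hid3 j j, hG3 j j]
        ring
      rw [← h2, hj]
    exact fun k => sum_mul_star_self_eq_zero (fun k => ![u0, u1, u2] k j) hsum k

lemma isGram_gramS {ι : Type} (s : Finset ι) (c : ι → Fin 3 → ℂ) : IsGram (gramS s c) := by
  classical
  refine ⟨{i // i ∈ s}, inferInstance, fun i => c i.1, fun j j' => ?_⟩
  rw [gramS]
  rw [← Finset.sum_coe_sort s (fun i => c i j * star (c i j'))]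

lemma isGram_add {G H : Fin 3 → Fin 3 → ℂ} (hG : IsGram G) (hH : IsGram H) :
    IsGram (fun j j' => G j j' + H j j') := by
  obtain ⟨ι, hι, c, hc⟩ := hG
  obtain ⟨κ, hκ, d, hd⟩ := hH
  letI := hι; letI := hκ
  refine ⟨ι ⊕ κ, inferInstance, Sum.elim c d, fun j j' => ?_⟩
  rw [Fintype.sum_sum_type]
  simp only [Sum.elim_inl, Sum.elim_inr]
  rw [hc, hd]

lemma isGram_rank1 (v : Fin 3 → ℂ) : IsGram (rank1 v) := by
  refine ⟨PUnit, inferInstance, fun _ => v, fun j j' => ?_⟩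
  simp [rank1]

def eab (a b : Fin 3) : Mat :=
  Matrix.of fun p q => (if p = a then (1:ℂ) else 0) * (if q = b then (1:ℂ) else 0)

lemma trace_form (N : Mat) (a b : Fin 3) :
    ∑ c : Fin 3, (N * eab a b * Nᴴ) c c = ∑ c : Fin 3, N c a * star (N c b) := by
  apply Finset.sum_congr rfl
  intro c _
  simp only [Matrix.mul_apply, Matrix.conjTranspose_apply, eab, Matrix.of_apply]
  have h1 : ∀ q : Fin 3, (∑ p : Fin 3, N c p * ((if p = a then (1:ℂ) else 0) *
      (if q = b then (1:ℂ) else 0))) = N c a * (if q = b then (1:ℂ) else 0) := by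
    intro q
    rw [Finset.sum_eq_single a]
    · simp
    · intro p _ hp; simp [hp]
    · intro ha; exact absurd (Finset.mem_univ a) ha
  calc ∑ q : Fin 3, (∑ p : Fin 3, N c p * ((if p = a then (1:ℂ) else 0) *
        (if q = b then (1:ℂ) else 0))) * star (N c q)
      = ∑ q : Fin 3, N c a * (if q = b then (1:ℂ) else 0) * star (N c q) :=
        Finset.sum_congr rfl fun q _ => by rw [h1 q]
    _ = N c a * star (N c b) := by
        rw [Finset.sum_eq_single b]
        · simp
        · intro q _ hq; simp [hq]
        · intro hb; exact absurd (Finset.mem_univ b) hb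

lemma sum_conjmul (M : Mat) (a b : Fin 3) :
    (Mᴴ * M) a b = star (∑ c : Fin 3, M c a * star (M c b)) := by
  rw [star_sum]
  simp only [Matrix.mul_apply, Matrix.conjTranspose_apply]
  exact Finset.sum_congr rfl fun c _ => by rw [star_mul', star_star]

lemma key_tp {σ : Type*} [Fintype σ] (M : σ → Mat) (a b : Fin 3) :
      (∑ i, (M i)ᴴ * M i) a b = star (∑ c : Fin 3, (∑ i, M i * eab a b * (M i)ᴴ) c c) := by
    simp only [Matrix.sum_apply]
    calc ∑ i, ((M i)ᴴ * M i) a b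
        = ∑ i, star (∑ c : Fin 3, M i c a * star (M i c b)) :=
          Finset.sum_congr rfl fun i _ => sum_conjmul (M i) a b
      _ = star (∑ i, ∑ c : Fin 3, M i c a * star (M i c b)) := (star_sum _ _).symm
      _ = star (∑ i, ∑ c : Fin 3, (M i * eab a b * (M i)ᴴ) c c) :=
          congrArg star (Finset.sum_congr rfl fun i _ => (trace_form (M i) a b).symm)
      _ = star (∑ c : Fin 3, ∑ i, (M i * eab a b * (M i)ᴴ) c c) :=
          congrArg star Finset.sum_comm

lemma tp_of_act {ι κ : Type*} [Fintype ι] [Fintype κ] (L : ι → Mat) (K : κ → Mat)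
    (hact : ∀ ρ, ∑ i, L i * ρ * (L i)ᴴ = ∑ i, K i * ρ * (K i)ᴴ) :
    ∑ i, (L i)ᴴ * L i = ∑ i, (K i)ᴴ * K i := by
  ext a b
  rw [key_tp L a b, key_tp K a b, hact (eab a b)]

lemma exists_op_decomp (K : Mat) (h : IsIncoherentKraus K) :
    ∃ (t : T3) (c : Fin 3 → ℂ), K = op (pat t) c := by
  classical
  have hcol : ∀ j, ∃ i0 : Fin 3, ∀ i, K i j ≠ 0 → i = i0 := by
    intro j
    by_cases hx : ∃ i, K i j ≠ 0
    · obtain ⟨i0, hi0⟩ := hx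
      exact ⟨i0, fun i hi => h j i i0 hi hi0⟩
    · push_neg at hx
      exact ⟨0, fun i hi => absurd (hx i) hi⟩
  choose g hg using hcol
  refine ⟨(g 0, g 1, g 2), fun j => K (g j) j, ?_⟩
  have hpat : pat (g 0, g 1, g 2) = g := by
    funext j; fin_cases j <;> rfl
  rw [hpat]
  ext i j
  simp only [op, Matrix.of_apply]
  by_cases hij : g j = i
  · rw [if_pos hij, one_mul, hij]
  · rw [if_neg hij, zero_mul]
    by_contra hne
    exact hij ((hg j i hne).symm)


def e3 : Equiv.Perm (Fin 3) := ⟨![2,0,1], ![1,2,0], by decide, by decide⟩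

lemma e3_0 : e3 0 = 2 := rfl
lemma e3_1 : e3 1 = 0 := rfl
lemma e3_2 : e3 2 = 1 := rfl

end
end QutritIO

open QutritIO

/-- Every qutrit incoherent operation admits a decomposition into at most 32
incoherent Kraus operators. -/
theorem qutrit_IO_32_kraus
    (Φ : Matrix (Fin 3) (Fin 3) ℂ → Matrix (Fin 3) (Fin 3) ℂ)
    (h : ∃ (n : ℕ) (K : Fin n → Matrix (Fin 3) (Fin 3) ℂ),
      (∀ i, IsIncoherentKraus (K i)) ∧
      (∑ i, (K i)ᴴ * K i = 1) ∧
      (∀ ρ, Φ ρ = ∑ i, K i * ρ * (K i)ᴴ)) :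
    ∃ L : Fin 32 → Matrix (Fin 3) (Fin 3) ℂ,
      (∀ j, IsIncoherentKraus (L j)) ∧
      (∑ j, (L j)ᴴ * L j = 1) ∧
      (∀ ρ, Φ ρ = ∑ j, L j * ρ * (L j)ᴴ) := by
  classical
  obtain ⟨n, K, hinc, hsum, hPhi⟩ := h
  choose γ κ hK using fun i => exists_op_decomp (K i) (hinc i)
  -- Stage 1: group by full pattern and triangularize each class Gram
  choose u hu0 hu1 hu2 hu3 hu4 using fun t : T3 =>
    chol (isGram_gramS (Finset.univ.filter fun i => γ i = t) κ) (Equiv.refl (Fin 3))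
  have hu1' : ∀ t, u t 1 0 = 0 := fun t => hu1 t
  have hu2' : ∀ t, u t 2 0 = 0 := fun t => hu2 t
  have hu3' : ∀ t, u t 2 1 = 0 := fun t => hu3 t
  have hfib : ∀ ρ : Mat, ∑ i, K i * ρ * (K i)ᴴ
      = ∑ t : T3, cact (pat t) (gramS (Finset.univ.filter fun i => γ i = t) κ) ρ := by
    intro ρ
    calc ∑ i, K i * ρ * (K i)ᴴ = ∑ i, act (pat (γ i)) (κ i) ρ := by
          refine Finset.sum_congr rfl fun i _ => ?_
          rw [hK i]; rfl
      _ = ∑ t : T3, ∑ i ∈ Finset.univ.filter fun i => γ i = t, act (pat (γ i)) (κ i) ρ :=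
          (Finset.sum_fiberwise _ _ _).symm
      _ = ∑ t : T3, cact (pat t) (gramS (Finset.univ.filter fun i => γ i = t) κ) ρ := by
          refine Finset.sum_congr rfl fun t _ => ?_
          rw [← sum_act_op]
          refine Finset.sum_congr rfl fun i hi => ?_
          rw [(Finset.mem_filter.mp hi).2]
  have hstage1 : ∀ ρ : Mat,
      ∑ t : T3, cact (pat t) (gramS (Finset.univ.filter fun i => γ i = t) κ) ρ
        = (∑ t : T3, act (pat t) (u t 0) ρ) + (∑ t : T3, act (pat t) (u t 1) ρ)
          + (∑ t : T3, act (pat t) (u t 2) ρ) := by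
    intro ρ
    rw [← Finset.sum_add_distrib, ← Finset.sum_add_distrib]
    refine Finset.sum_congr rfl fun t _ => ?_
    rw [cact_congr (pat t) (hu0 t) ρ, cact_gram3]
  -- A-part split by the value of the pattern at column 0
  have hA : ∀ ρ : Mat, ∑ t : T3, act (pat t) (u t 0) ρ
      = (∑ p : F2, act (pat (0, p)) (u (0, p) 0) ρ)
        + (∑ p : F2, act (pat (1, p)) (u (1, p) 0) ρ)
        + (∑ p : F2, act (pat (2, p)) (u (2, p) 0) ρ) := by
    intro ρ
    rw [Fintype.sum_prod_type, Fin.sum_univ_three]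
  -- B-part: repattern column 0 to row 0, and regroup by (x, y)
  have hB : ∀ ρ : Mat, ∑ t : T3, act (pat t) (u t 1) ρ
      = ∑ p : F2, cact (pat (0, p)) (gramS Finset.univ fun r => u (r, p) 1) ρ := by
    intro ρ
    rw [Fintype.sum_prod_type]
    rw [Finset.sum_comm]
    refine Finset.sum_congr rfl fun p _ => ?_
    rw [← sum_act_op]
    refine Finset.sum_congr rfl fun r _ => ?_
    refine act_congr _ (fun j hj => ?_) ρ
    fin_cases j
    · exact absurd (hu1' (r, p)) hj
    · rfl
    · rfl
  -- Stage 2: pool the A0 and B parts per (x,y)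
  have hQ : ∀ ρ : Mat,
      (∑ p : F2, act (pat (0, p)) (u (0, p) 0) ρ)
        + (∑ p : F2, cact (pat (0, p)) (gramS Finset.univ fun r => u (r, p) 1) ρ)
      = ∑ p : F2, cact (pat (0, p))
          (fun j j' => rank1 (u (0, p) 0) j j' + gramS Finset.univ (fun r => u (r, p) 1) j j') ρ := by
    intro ρ
    rw [← Finset.sum_add_distrib]
    refine Finset.sum_congr rfl fun p _ => ?_
    rw [cact_add, ← act_op]
  choose v hv0 hv1 hv2 hv3 hv4 using fun p : F2 =>
    chol (isGram_add (isGram_rank1 (u (0, p) 0))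
      (isGram_gramS Finset.univ fun r => u (r, p) 1)) (Equiv.swap 0 1)
  have hv1' : ∀ p, v p 1 1 = 0 := by
    intro p; have := hv1 p; rwa [Equiv.swap_apply_left] at this
  have hv2' : ∀ p, v p 2 1 = 0 := by
    intro p; have := hv2 p; rwa [Equiv.swap_apply_left] at this
  have hv3' : ∀ p, v p 2 0 = 0 := by
    intro p; have := hv3 p; rwa [Equiv.swap_apply_right] at this
  have hstage2 : ∀ ρ : Mat,
      ∑ p : F2, cact (pat (0, p))
          (fun j j' => rank1 (u (0, p) 0) j j' + gramS Finset.univ (fun r => u (r, p) 1) j j') ρ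
      = (∑ p : F2, act (pat (0, p)) (v p 0) ρ) + (∑ p : F2, act (pat (0, p)) (v p 1) ρ)
        + (∑ p : F2, act (pat (0, p)) (v p 2) ρ) := by
    intro ρ
    rw [← Finset.sum_add_distrib, ← Finset.sum_add_distrib]
    refine Finset.sum_congr rfl fun p _ => ?_
    rw [cact_congr (pat (0, p)) (hv0 p) ρ, cact_gram3]
  -- split of the stage-2 leading vectors by the value x
  have hS2a : ∀ ρ : Mat, ∑ p : F2, act (pat (0, p)) (v p 0) ρ
      = (∑ y : Fin 3, act (pat (0, (0, y))) (v (0, y) 0) ρ)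
        + (∑ y : Fin 3, act (pat (0, (1, y))) (v (1, y) 0) ρ)
        + (∑ y : Fin 3, act (pat (0, (2, y))) (v (2, y) 0) ρ) := by
    intro ρ
    rw [Fintype.sum_prod_type, Fin.sum_univ_three]
  -- stage-2 second vectors: repattern column 1 to row 0 and regroup by y
  have hS2b : ∀ ρ : Mat, ∑ p : F2, act (pat (0, p)) (v p 1) ρ
      = ∑ y : Fin 3, cact (pat (0, (0, y))) (gramS Finset.univ fun x => v (x, y) 1) ρ := by
    intro ρ
    rw [Fintype.sum_prod_type]
    rw [Finset.sum_comm]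
    refine Finset.sum_congr rfl fun y _ => ?_
    rw [← sum_act_op]
    refine Finset.sum_congr rfl fun x _ => ?_
    refine act_congr _ (fun j hj => ?_) ρ
    fin_cases j
    · rfl
    · exact absurd (hv1' (x, y)) hj
    · rfl
  -- Stage 3 pools
  have hR : ∀ ρ : Mat,
      (∑ y : Fin 3, act (pat (0, (0, y))) (v (0, y) 0) ρ)
        + (∑ y : Fin 3, cact (pat (0, (0, y))) (gramS Finset.univ fun x => v (x, y) 1) ρ)
      = ∑ y : Fin 3, cact (pat (0, (0, y)))
          (fun j j' => rank1 (v (0, y) 0) j j' + gramS Finset.univ (fun x => v (x, y) 1) j j') ρ := by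
    intro ρ
    rw [← Finset.sum_add_distrib]
    refine Finset.sum_congr rfl fun y _ => ?_
    rw [cact_add, ← act_op]
  choose w hw0 hw1 hw2 hw3 hw4 using fun y : Fin 3 =>
    chol (isGram_add (isGram_rank1 (v (0, y) 0))
      (isGram_gramS Finset.univ fun x => v (x, y) 1)) e3
  have hw1' : ∀ y, w y 1 2 = 0 := fun y => hw1 y
  have hw2' : ∀ y, w y 2 2 = 0 := fun y => hw2 y
  have hw3' : ∀ y, w y 2 0 = 0 := fun y => hw3 y
  have hstage3 : ∀ ρ : Mat,
      ∑ y : Fin 3, cact (pat (0, (0, y)))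
          (fun j j' => rank1 (v (0, y) 0) j j' + gramS Finset.univ (fun x => v (x, y) 1) j j') ρ
      = (∑ y : Fin 3, act (pat (0, (0, y))) (w y 0) ρ)
        + (∑ y : Fin 3, act (pat (0, (0, y))) (w y 1) ρ)
        + (∑ y : Fin 3, act (pat (0, (0, y))) (w y 2) ρ) := by
    intro ρ
    rw [← Finset.sum_add_distrib, ← Finset.sum_add_distrib]
    refine Finset.sum_congr rfl fun y _ => ?_
    rw [cact_congr (pat (0, (0, y))) (hw0 y) ρ, cact_gram3]
  -- Stage 4: pool the middle outputs of stage 3 (supported on columns 0,1)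
  have hW1 : ∀ ρ : Mat, ∑ y : Fin 3, act (pat (0, (0, y))) (w y 1) ρ
      = cact (pat (0, (0, 0))) (gramS Finset.univ fun y => w y 1) ρ := by
    intro ρ
    rw [← sum_act_op]
    refine Finset.sum_congr rfl fun y _ => ?_
    refine act_congr _ (fun j hj => ?_) ρ
    fin_cases j
    · rfl
    · rfl
    · exact absurd (hw1' y) hj
  obtain ⟨m, hm0, hm1, hm2, hm3, hm4⟩ :=
    chol (isGram_gramS Finset.univ fun y => w y 1) (Equiv.refl (Fin 3))
  have hm1' : m 1 0 = 0 := hm1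
  have hm2'0 : m 2 0 = 0 := hm2
  have hm2'1 : m 2 1 = 0 := hm3
  have hGM22 : gramS Finset.univ (fun y => w y 1) 2 2 = 0 := by
    rw [gramS]
    exact Finset.sum_eq_zero fun y _ => by rw [hw1' y, zero_mul]
  have hmz2 : ∀ k, m k 2 = 0 := hm4 2 hGM22
  have hMdec : ∀ ρ : Mat, cact (pat (0, (0, 0))) (gramS Finset.univ fun y => w y 1) ρ
      = act (pat (0, (0, 0))) (m 0) ρ + act (pat (0, (0, 0))) (m 1) ρ
        + act (pat (0, (0, 0))) (m 2) ρ := by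
    intro ρ
    rw [cact_congr (pat (0, (0, 0))) hm0 ρ, cact_gram3]
  -- pool supported on column 1, row 0
  have hW2 : ∀ ρ : Mat, ∑ y : Fin 3, act (pat (0, (0, y))) (w y 2) ρ
      = cact (pat (0, (0, 0))) (gramS Finset.univ fun y => w y 2) ρ := by
    intro ρ
    rw [← sum_act_op]
    refine Finset.sum_congr rfl fun y _ => ?_
    refine act_congr _ (fun j hj => ?_) ρ
    fin_cases j
    · exact absurd (hw3' y) hj
    · rfl
    · exact absurd (hw2' y) hj
  have hN1 : ∀ ρ : Mat,
      cact (pat (0, (0, 0))) (gramS Finset.univ fun y => w y 2) ρ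
        + act (pat (0, (0, 0))) (m 1) ρ + act (pat (0, (0, 0))) (m 2) ρ
      = cact (pat (0, (0, 0)))
          (fun j j' => gramS Finset.univ (fun y => w y 2) j j'
            + (rank1 (m 1) j j' + rank1 (m 2) j j')) ρ := by
    intro ρ
    rw [cact_add, cact_add, ← act_op, ← act_op, add_assoc]
  obtain ⟨q, hq0, hq1, hq2, hq3, hq4⟩ :=
    chol (isGram_add (isGram_gramS Finset.univ fun y => w y 2)
      (isGram_add (isGram_rank1 (m 1)) (isGram_rank1 (m 2)))) (Equiv.swap 0 1)
  have hq1' : q 1 1 = 0 := by have := hq1; rwa [Equiv.swap_apply_left] at this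
  have hq2' : q 2 1 = 0 := by have := hq2; rwa [Equiv.swap_apply_left] at this
  have hq3' : q 2 0 = 0 := by have := hq3; rwa [Equiv.swap_apply_right] at this
  have hNN00 : (gramS Finset.univ (fun y => w y 2) 0 0
      + (rank1 (m 1) 0 0 + rank1 (m 2) 0 0)) = 0 := by
    have hA0 : gramS Finset.univ (fun y => w y 2) 0 0 = 0 := by
      rw [gramS]
      exact Finset.sum_eq_zero fun y _ => by rw [hw3' y, zero_mul]
    simp [rank1, hA0, hm1', hm2'0]
  have hNN22 : (gramS Finset.univ (fun y => w y 2) 2 2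
      + (rank1 (m 1) 2 2 + rank1 (m 2) 2 2)) = 0 := by
    have hA2 : gramS Finset.univ (fun y => w y 2) 2 2 = 0 := by
      rw [gramS]
      exact Finset.sum_eq_zero fun y _ => by rw [hw2' y, zero_mul]
    simp [rank1, hA2, hmz2 1, hmz2 2]
  have hqz0 : ∀ k, q k 0 = 0 := hq4 0 hNN00
  have hqz2 : ∀ k, q k 2 = 0 := hq4 2 hNN22
  have hNdec : ∀ ρ : Mat,
      cact (pat (0, (0, 0)))
          (fun j j' => gramS Finset.univ (fun y => w y 2) j j'
            + (rank1 (m 1) j j' + rank1 (m 2) j j')) ρ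
      = act (pat (0, (0, 0))) (q 0) ρ := by
    intro ρ
    rw [cact_congr (pat (0, (0, 0))) hq0 ρ, cact_gram3]
    have z1 : act (pat (0, (0, 0))) (q 1) ρ = 0 := by
      refine act_zero _ _ (fun j => ?_) ρ
      fin_cases j
      · exact hqz0 1
      · exact hq1'
      · exact hqz2 1
    have z2 : act (pat (0, (0, 0))) (q 2) ρ = 0 := by
      refine act_zero _ _ (fun j => ?_) ρ
      fin_cases j
      · exact hqz0 2
      · exact hq2'
      · exact hqz2 2
    rw [z1, z2, add_zero, add_zero]
  -- Stage 5: the column-2 pools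
  have hC : ∀ ρ : Mat, ∑ t : T3, act (pat t) (u t 2) ρ
      = ∑ y : Fin 3, cact (pat (0, (0, y)))
          (gramS Finset.univ fun rx : F2 => u (rx.1, (rx.2, y)) 2) ρ := by
    intro ρ
    rw [Fintype.sum_prod_type]
    calc ∑ r : Fin 3, ∑ p : F2, act (pat (r, p)) (u (r, p) 2) ρ
        = ∑ r : Fin 3, ∑ x : Fin 3, ∑ y : Fin 3,
            act (pat (0, (0, y))) (u (r, (x, y)) 2) ρ := by
          refine Finset.sum_congr rfl fun r _ => ?_
          rw [Fintype.sum_prod_type]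
          refine Finset.sum_congr rfl fun x _ => ?_
          refine Finset.sum_congr rfl fun y _ => ?_
          refine act_congr _ (fun j hj => ?_) ρ
          fin_cases j
          · exact absurd (hu2' (r, (x, y))) hj
          · exact absurd (hu3' (r, (x, y))) hj
          · rfl
      _ = ∑ r : Fin 3, ∑ y : Fin 3, ∑ x : Fin 3,
            act (pat (0, (0, y))) (u (r, (x, y)) 2) ρ := by
          refine Finset.sum_congr rfl fun r _ => ?_
          exact Finset.sum_comm
      _ = ∑ y : Fin 3, ∑ r : Fin 3, ∑ x : Fin 3,
            act (pat (0, (0, y))) (u (r, (x, y)) 2) ρ := Finset.sum_comm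
      _ = ∑ y : Fin 3, cact (pat (0, (0, y)))
            (gramS Finset.univ fun rx : F2 => u (rx.1, (rx.2, y)) 2) ρ := by
          refine Finset.sum_congr rfl fun y _ => ?_
          rw [← sum_act_op, Fintype.sum_prod_type]
  have hS2c : ∀ ρ : Mat, ∑ p : F2, act (pat (0, p)) (v p 2) ρ
      = ∑ y : Fin 3, cact (pat (0, (0, y))) (gramS Finset.univ fun x => v (x, y) 2) ρ := by
    intro ρ
    rw [Fintype.sum_prod_type]
    rw [Finset.sum_comm]
    refine Finset.sum_congr rfl fun y _ => ?_
    rw [← sum_act_op]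
    refine Finset.sum_congr rfl fun x _ => ?_
    refine act_congr _ (fun j hj => ?_) ρ
    fin_cases j
    · exact absurd (hv3' (x, y)) hj
    · exact absurd (hv2' (x, y)) hj
    · rfl
  have hPC : ∀ ρ : Mat,
      (∑ y : Fin 3, cact (pat (0, (0, y)))
          (gramS Finset.univ fun rx : F2 => u (rx.1, (rx.2, y)) 2) ρ)
        + (∑ y : Fin 3, cact (pat (0, (0, y))) (gramS Finset.univ fun x => v (x, y) 2) ρ)
      = ∑ y : Fin 3, cact (pat (0, (0, y)))
          (fun j j' => gramS Finset.univ (fun rx : F2 => u (rx.1, (rx.2, y)) 2) j j'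
            + gramS Finset.univ (fun x => v (x, y) 2) j j') ρ := by
    intro ρ
    rw [← Finset.sum_add_distrib]
    refine Finset.sum_congr rfl fun y _ => ?_
    rw [cact_add]
  choose nn hn0 hn1 hn2 hn3 hn4 using fun y : Fin 3 =>
    chol (isGram_add (isGram_gramS Finset.univ fun rx : F2 => u (rx.1, (rx.2, y)) 2)
      (isGram_gramS Finset.univ fun x => v (x, y) 2)) (Equiv.swap 0 2)
  have hn1' : ∀ y, nn y 1 2 = 0 := by
    intro y; have := hn1 y; rwa [Equiv.swap_apply_left] at this
  have hn2' : ∀ y, nn y 2 2 = 0 := by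
    intro y; have := hn2 y; rwa [Equiv.swap_apply_left] at this
  have hn3' : ∀ y, nn y 2 1 = 0 := by
    intro y; have := hn3 y
    rwa [Equiv.swap_apply_of_ne_of_ne (by decide) (by decide)] at this
  have hPC00 : ∀ y : Fin 3, (gramS Finset.univ (fun rx : F2 => u (rx.1, (rx.2, y)) 2) 0 0
      + gramS Finset.univ (fun x => v (x, y) 2) 0 0) = 0 := by
    intro y
    have h1 : gramS Finset.univ (fun rx : F2 => u (rx.1, (rx.2, y)) 2) 0 0 = 0 := by
      rw [gramS]
      exact Finset.sum_eq_zero fun rx _ => by rw [hu2' (rx.1, (rx.2, y)), zero_mul]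
    have h2 : gramS Finset.univ (fun x => v (x, y) 2) 0 0 = 0 := by
      rw [gramS]
      exact Finset.sum_eq_zero fun x _ => by rw [hv3' (x, y), zero_mul]
    rw [h1, h2, add_zero]
  have hPC11 : ∀ y : Fin 3, (gramS Finset.univ (fun rx : F2 => u (rx.1, (rx.2, y)) 2) 1 1
      + gramS Finset.univ (fun x => v (x, y) 2) 1 1) = 0 := by
    intro y
    have h1 : gramS Finset.univ (fun rx : F2 => u (rx.1, (rx.2, y)) 2) 1 1 = 0 := by
      rw [gramS]
      exact Finset.sum_eq_zero fun rx _ => by rw [hu3' (rx.1, (rx.2, y)), zero_mul]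
    have h2 : gramS Finset.univ (fun x => v (x, y) 2) 1 1 = 0 := by
      rw [gramS]
      exact Finset.sum_eq_zero fun x _ => by rw [hv2' (x, y), zero_mul]
    rw [h1, h2, add_zero]
  have hnz0 : ∀ y k, nn y k 0 = 0 := fun y => hn4 y 0 (hPC00 y)
  have hnz1 : ∀ y k, nn y k 1 = 0 := fun y => hn4 y 1 (hPC11 y)
  have hPCdec : ∀ ρ : Mat,
      ∑ y : Fin 3, cact (pat (0, (0, y)))
          (fun j j' => gramS Finset.univ (fun rx : F2 => u (rx.1, (rx.2, y)) 2) j j'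
            + gramS Finset.univ (fun x => v (x, y) 2) j j') ρ
      = ∑ y : Fin 3, act (pat (0, (0, y))) (nn y 0) ρ := by
    intro ρ
    refine Finset.sum_congr rfl fun y _ => ?_
    rw [cact_congr (pat (0, (0, y))) (hn0 y) ρ, cact_gram3]
    have z1 : act (pat (0, (0, y))) (nn y 1) ρ = 0 := by
      refine act_zero _ _ (fun j => ?_) ρ
      fin_cases j
      · exact hnz0 y 1
      · exact hnz1 y 1
      · exact hn1' y
    have z2 : act (pat (0, (0, y))) (nn y 2) ρ = 0 := by
      refine act_zero _ _ (fun j => ?_) ρ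
      fin_cases j
      · exact hnz0 y 2
      · exact hnz1 y 2
      · exact hn2' y
    rw [z1, z2, add_zero, add_zero]
  have rearr1 : ∀ a0 a1 a2 b c : Mat, a0 + a1 + a2 + b + c = a1 + a2 + (a0 + b) + c := by
    intros; abel
  have rearr2 : ∀ a1 a2 s00 s01 s02 gr sv2 c : Mat,
      a1 + a2 + (s00 + s01 + s02 + gr + sv2) + c
        = a1 + a2 + s01 + s02 + (s00 + gr) + sv2 + c := by
    intros; abel
  have rearr3 : ∀ a1 a2 s01 s02 sw0 m0 m1 m2 w2 sv2 c : Mat,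
      a1 + a2 + s01 + s02 + (sw0 + (m0 + m1 + m2) + w2) + sv2 + c
        = a1 + a2 + s01 + s02 + sw0 + m0 + (w2 + m1 + m2) + sv2 + c := by
    intros; abel
  have rearr4 : ∀ a1 a2 s01 s02 sw0 m0 q gd c : Mat,
      a1 + a2 + s01 + s02 + sw0 + m0 + q + gd + c
        = a1 + a2 + s01 + s02 + sw0 + m0 + q + (c + gd) := by
    intros; abel
  have main : ∀ ρ : Mat, ∑ i, K i * ρ * (K i)ᴴ
      = (∑ p : F2, act (pat (1, p)) (u (1, p) 0) ρ)
        + (∑ p : F2, act (pat (2, p)) (u (2, p) 0) ρ)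
        + (∑ y : Fin 3, act (pat (0, (1, y))) (v (1, y) 0) ρ)
        + (∑ y : Fin 3, act (pat (0, (2, y))) (v (2, y) 0) ρ)
        + (∑ y : Fin 3, act (pat (0, (0, y))) (w y 0) ρ)
        + act (pat (0, (0, 0))) (m 0) ρ
        + act (pat (0, (0, 0))) (q 0) ρ
        + (∑ y : Fin 3, act (pat (0, (0, y))) (nn y 0) ρ) := by
    intro ρ
    rw [hfib ρ, hstage1 ρ, hA ρ, hB ρ, hC ρ]
    rw [rearr1, hQ ρ, hstage2 ρ, hS2a ρ, hS2b ρ, rearr2, hR ρ, hstage3 ρ, hW1 ρ, hMdec ρ,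
      hW2 ρ, rearr3, hN1 ρ, hNdec ρ, hS2c ρ, rearr4, hPC ρ, hPCdec ρ]
  -- Final assembly into 32 Kraus operators
  have hcard : Fintype.card (T3 ⊕ Fin 5) = 32 := by
    simp [Fintype.card_sum, Fintype.card_prod]
  let E : (T3 ⊕ Fin 5) ≃ Fin 32 := Fintype.equivFinOfCardEq hcard
  obtain ⟨D, hD⟩ : ∃ D : T3 ⊕ Fin 5 → T3 × (Fin 3 → ℂ),
      D = Sum.elim
        (fun t : T3 => (t, if t.1 = 0 then (if t.2.1 = 0 then w t.2.2 0 else v t.2 0) else u t 0))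
        ![(((0:Fin 3), ((0:Fin 3), (0:Fin 3))), m 0), (((0:Fin 3), ((0:Fin 3), (0:Fin 3))), q 0),
          (((0:Fin 3), ((0:Fin 3), (0:Fin 3))), nn 0 0), (((0:Fin 3), ((0:Fin 3), (1:Fin 3))), nn 1 0),
          (((0:Fin 3), ((0:Fin 3), (2:Fin 3))), nn 2 0)] := ⟨_, rfl⟩
  set L : Fin 32 → Mat := fun s => op (pat (D (E.symm s)).1) (D (E.symm s)).2 with hLdef
  have hact : ∀ ρ : Mat, ∑ s : Fin 32, L s * ρ * (L s)ᴴ = ∑ i, K i * ρ * (K i)ᴴ := by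
    intro ρ
    have h32 : ∑ s : Fin 32, L s * ρ * (L s)ᴴ
        = ∑ i : T3 ⊕ Fin 5, act (pat (D i).1) (D i).2 ρ :=
      Equiv.sum_comp E.symm (fun i => act (pat (D i).1) (D i).2 ρ)
    rw [h32, hD, Fintype.sum_sum_type]
    simp only [Sum.elim_inl, Sum.elim_inr]
    have hL0 : ∑ p : F2, act (pat (0, p)) (if p.1 = 0 then w p.2 0 else v p 0) ρ
        = (∑ y : Fin 3, act (pat (0, (0, y))) (w y 0) ρ)
          + (∑ y : Fin 3, act (pat (0, (1, y))) (v (1, y) 0) ρ)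
          + (∑ y : Fin 3, act (pat (0, (2, y))) (v (2, y) 0) ρ) := by
      rw [Fintype.sum_prod_type, Fin.sum_univ_three]
      simp only [show ((0:Fin 3) = 0) = True from by simp,
        show ((1:Fin 3) = 0) = False from by simp,
        show ((2:Fin 3) = 0) = False from by simp, if_true, if_false]
    have hleft : ∑ t : T3, act (pat t)
        (if t.1 = 0 then (if t.2.1 = 0 then w t.2.2 0 else v t.2 0) else u t 0) ρ
        = (∑ p : F2, act (pat (0, p)) (if p.1 = 0 then w p.2 0 else v p 0) ρ)
          + (∑ p : F2, act (pat (1, p)) (u (1, p) 0) ρ)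
          + (∑ p : F2, act (pat (2, p)) (u (2, p) 0) ρ) := by
      rw [Fintype.sum_prod_type, Fin.sum_univ_three]
      simp only [show ((0:Fin 3) = 0) = True from by simp,
        show ((1:Fin 3) = 0) = False from by simp,
        show ((2:Fin 3) = 0) = False from by simp, if_true, if_false]
    have hright : ∑ k : Fin 5, act (pat ((![(((0:Fin 3), ((0:Fin 3), (0:Fin 3))), m 0),
          (((0:Fin 3), ((0:Fin 3), (0:Fin 3))), q 0),
          (((0:Fin 3), ((0:Fin 3), (0:Fin 3))), nn 0 0),
          (((0:Fin 3), ((0:Fin 3), (1:Fin 3))), nn 1 0),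
          (((0:Fin 3), ((0:Fin 3), (2:Fin 3))), nn 2 0)] : Fin 5 → T3 × (Fin 3 → ℂ)) k).1)
          ((![(((0:Fin 3), ((0:Fin 3), (0:Fin 3))), m 0),
          (((0:Fin 3), ((0:Fin 3), (0:Fin 3))), q 0),
          (((0:Fin 3), ((0:Fin 3), (0:Fin 3))), nn 0 0),
          (((0:Fin 3), ((0:Fin 3), (1:Fin 3))), nn 1 0),
          (((0:Fin 3), ((0:Fin 3), (2:Fin 3))), nn 2 0)] : Fin 5 → T3 × (Fin 3 → ℂ)) k).2 ρ
        = act (pat (0, (0, 0))) (m 0) ρ + act (pat (0, (0, 0))) (q 0) ρ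
          + act (pat (0, (0, 0))) (nn 0 0) ρ + act (pat (0, (0, 1))) (nn 1 0) ρ
          + act (pat (0, (0, 2))) (nn 2 0) ρ := by
      rw [Fin.sum_univ_five]
      rfl
    rw [hleft, hL0, hright, main ρ, Fin.sum_univ_three (fun y => act (pat (0, (0, y))) (nn y 0) ρ)]
    abel
  refine ⟨L, fun s => ?_, ?_, fun ρ => ?_⟩
  · rw [hLdef]
    exact op_incoherent _ _
  · rw [tp_of_act L K hact]
    exact hsum
  · rw [hPhi ρ, ← hact ρ]
end

section
/- Let a₃₂, a₂₄, a₃₇, a₃₉, b₃₂, b₂₄ ∈ ℂ and define the 3×3 matrices (with Eⱼₖ denoting matrix units): M₁ = a₃₂·E₃₁ + b₃₂·E₃₂, M₂ = a₂₄·E₂₁ + b₂₄·E₃₂, M₃ = a₃₇·E₃₁, M₄ = a₃₉·E₂₁. Then there exist 3×3 complex matrices L₁, L₂, L₃, with L₁ supported on the entries (3,1) and (3,2), L₂ supported on the entries (2,1) and (3,2), and L₃ supported on the entry (2,1) (in particular all three are incoherent Kraus operators), such that ∑ₖ₌₁⁴ Mₖ ρ Mₖ† = ∑ₖ₌₁³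 Lₖ ρ Lₖ† for all ρ ∈ M₃(ℂ). -/
open Matrix

/-- The 3×3 matrix unit with a 1 in row `j`, column `k` (0-indexed). -/
def E (j k : Fin 3) : Matrix (Fin 3) (Fin 3) ℂ := Matrix.single j k 1

/-- `L` is supported on the set `S` of (row, column) positions: every entry of
`L` outside `S` vanishes. -/
def SupportedOn (L : Matrix (Fin 3) (Fin 3) ℂ) (S : Set (Fin 3 × Fin 3)) : Prop :=
  ∀ p q, L p q ≠ 0 → (p, q) ∈ S

section Aux

open Complex ComplexConjugate

private lemma supp20_21 (x y : ℂ) :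
    SupportedOn (x • E 2 0 + y • E 2 1) {(2, 0), (2, 1)} := by
  intro i j h
  fin_cases i <;> fin_cases j <;>
    simp [E, Matrix.single, Matrix.add_apply, Matrix.smul_apply] at h ⊢

private lemma supp10_21 (x y : ℂ) :
    SupportedOn (x • E 1 0 + y • E 2 1) {(1, 0), (2, 1)} := by
  intro i j h
  fin_cases i <;> fin_cases j <;>
    simp [E, Matrix.single, Matrix.add_apply, Matrix.smul_apply] at h ⊢

private lemma supp10 (x : ℂ) :
    SupportedOn (x • E 1 0) {(1, 0)} := by
  intro i j h
  fin_cases i <;> fin_cases j <;>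
    simp [E, Matrix.single, Matrix.smul_apply] at h ⊢

private lemma key (a₃₂ a₂₄ a₃₇ a₃₉ b₃₂ b₂₄ x y p q r : ℂ)
    (hA : x * conj x = a₃₂ * conj a₃₂ + a₃₇ * conj a₃₇)
    (hB : x * conj y = a₃₂ * conj b₃₂)
    (hC : y * conj y + q * conj q = b₃₂ * conj b₃₂ + b₂₄ * conj b₂₄)
    (hD : p * conj q = a₂₄ * conj b₂₄)
    (hE : p * conj p + r * conj r = a₂₄ * conj a₂₄ + a₃₉ * conj a₃₉)
    (ρ : Matrix (Fin 3) (Fin 3) ℂ) :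
        (a₃₂ • E 2 0 + b₃₂ • E 2 1) * ρ * (a₃₂ • E 2 0 + b₃₂ • E 2 1)ᴴ +
        (a₂₄ • E 1 0 + b₂₄ • E 2 1) * ρ * (a₂₄ • E 1 0 + b₂₄ • E 2 1)ᴴ +
        (a₃₇ • E 2 0) * ρ * (a₃₇ • E 2 0)ᴴ +
        (a₃₉ • E 1 0) * ρ * (a₃₉ • E 1 0)ᴴ =
        (x • E 2 0 + y • E 2 1) * ρ * (x • E 2 0 + y • E 2 1)ᴴ +
        (p • E 1 0 + q • E 2 1) * ρ * (p • E 1 0 + q • E 2 1)ᴴ +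
        (r • E 1 0) * ρ * (r • E 1 0)ᴴ := by
  have hB' : (starRingEnd ℂ) x * y = (starRingEnd ℂ) a₃₂ * b₃₂ := by
    have := congrArg (starRingEnd ℂ) hB; simpa using this
  have hD' : (starRingEnd ℂ) p * q = (starRingEnd ℂ) a₂₄ * b₂₄ := by
    have := congrArg (starRingEnd ℂ) hD; simpa using this
  ext i j
  fin_cases i <;> fin_cases j <;>
    simp [E, Matrix.mul_apply, Matrix.conjTranspose_apply, Fin.sum_univ_three,
      Matrix.single, Matrix.add_apply, Matrix.smul_apply] <;>
  first
    | linear_combination ρ 0 1 * hD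
    | linear_combination - ρ 0 1 * hD
    | linear_combination ρ 1 0 * hD'
    | linear_combination - ρ 1 0 * hD'
    | linear_combination ρ 0 0 * hE
    | linear_combination - ρ 0 0 * hE
    | linear_combination ρ 0 0 * hA + ρ 0 1 * hB + ρ 1 0 * hB' + ρ 1 1 * hC
    | linear_combination - (ρ 0 0 * hA + ρ 0 1 * hB + ρ 1 0 * hB' + ρ 1 1 * hC)

private lemma exists_sol (a₃₂ a₂₄ a₃₇ a₃₉ b₃₂ b₂₄ : ℂ) :
    ∃ x y p q r : ℂ,
    (x * conj x = a₃₂ * conj a₃₂ + a₃₇ * conj a₃₇) ∧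
    (x * conj y = a₃₂ * conj b₃₂) ∧
    (y * conj y + q * conj q = b₃₂ * conj b₃₂ + b₂₄ * conj b₂₄) ∧
    (p * conj q = a₂₄ * conj b₂₄) ∧
    (p * conj p + r * conj r = a₂₄ * conj a₂₄ + a₃₉ * conj a₃₉) := by
  by_cases hs : normSq a₃₂ + normSq a₃₇ = 0
  · have h2 : a₃₂ = 0 := by
      have := normSq_nonneg a₃₂; have := normSq_nonneg a₃₇
      exact normSq_eq_zero.mp (by linarith)
    have h7 : a₃₇ = 0 := by
      have := normSq_nonneg a₃₂; have := normSq_nonneg a₃₇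
      exact normSq_eq_zero.mp (by linarith)
    exact ⟨0, b₃₂, a₂₄, b₂₄, a₃₉, by simp [h2, h7], by simp [h2], by ring, by ring, by ring⟩
  · set s : ℝ := Real.sqrt (normSq a₃₂ + normSq a₃₇) with hsdef
    have hsum : 0 ≤ normSq a₃₂ + normSq a₃₇ := add_nonneg (normSq_nonneg _) (normSq_nonneg _)
    have hs2 : s ^ 2 = normSq a₃₂ + normSq a₃₇ := Real.sq_sqrt hsum
    have hs0 : s ≠ 0 := by
      intro h; apply hs; rw [← hs2, h]; ring
    have hsC : (s : ℂ) ≠ 0 := by exact_mod_cast hs0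
    set targ : ℝ := normSq b₂₄ + normSq a₃₇ * normSq b₃₂ / s ^ 2 with htdef
    have htnn : 0 ≤ targ := add_nonneg (normSq_nonneg _)
      (div_nonneg (mul_nonneg (normSq_nonneg _) (normSq_nonneg _)) (sq_nonneg _))
    set t : ℝ := Real.sqrt targ with htdef2
    have ht2 : t ^ 2 = targ := Real.sq_sqrt htnn
    set x : ℂ := (s : ℂ) with hx
    set y : ℂ := conj a₃₂ * b₃₂ / s with hy
    set q : ℂ := (t : ℂ) with hq
    set p : ℂ := a₂₄ * conj b₂₄ / t with hp
    have hrarg : 0 ≤ normSq a₂₄ + normSq a₃₉ - normSq a₂₄ * normSq b₂₄ / t ^ 2 := by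
      have h1 : normSq a₂₄ * normSq b₂₄ / t ^ 2 ≤ normSq a₂₄ := by
        by_cases ht0 : t = 0
        · simp [ht0]; exact normSq_nonneg _
        · rw [div_le_iff₀ (by positivity)]
          have h3 : normSq b₂₄ ≤ t ^ 2 := by
            rw [ht2, htdef]
            have : 0 ≤ normSq a₃₇ * normSq b₃₂ / s ^ 2 :=
              div_nonneg (mul_nonneg (normSq_nonneg _) (normSq_nonneg _)) (sq_nonneg _)
            linarith
          nlinarith [normSq_nonneg a₂₄, normSq_nonneg b₂₄]
      have := normSq_nonneg a₃₉
      linarith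
    set r : ℂ := (Real.sqrt (normSq a₂₄ + normSq a₃₉ - normSq a₂₄ * normSq b₂₄ / t ^ 2) : ℂ)
      with hr
    refine ⟨x, y, p, q, r, ?_, ?_, ?_, ?_, ?_⟩
    · rw [hx, mul_conj, mul_conj, mul_conj]
      norm_cast
      rw [normSq_ofReal, ← hs2]; ring
    · rw [hx, hy]
      simp only [map_div₀, _root_.map_mul, Complex.conj_ofReal, Complex.conj_conj]
      field_simp
      rw [mul_assoc, mul_div_cancel_left₀ _ (show (s : ℂ) ≠ 0 from hsC)]
    · have hy2 : normSq y = normSq a₃₂ * normSq b₃₂ / s ^ 2 := by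
        rw [hy]
        rw [normSq_div, normSq_mul, normSq_conj, normSq_ofReal]
        ring_nf
      rw [mul_conj, mul_conj, mul_conj, mul_conj]
      norm_cast
      rw [hy2, normSq_ofReal]
      have h6 : t * t = targ := by rw [← ht2]; ring
      rw [h6, htdef]
      field_simp
      linear_combination (-normSq b₃₂) * hs2
    · by_cases ht0 : t = 0
      · have hb : b₂₄ = 0 := by
          have h4 : 0 ≤ normSq a₃₇ * normSq b₃₂ / s ^ 2 :=
            div_nonneg (mul_nonneg (normSq_nonneg _) (normSq_nonneg _)) (sq_nonneg _)
          have h0 : targ = 0 := by rw [← ht2, ht0]; ring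
          rw [htdef] at h0
          have h5 := normSq_nonneg b₂₄
          exact normSq_eq_zero.mp (by linarith)
        simp [hp, hb]
      · have htC : (t : ℂ) ≠ 0 := by exact_mod_cast ht0
        rw [hp, hq, Complex.conj_ofReal]
        field_simp
    · have hp2 : normSq p = normSq a₂₄ * normSq b₂₄ / t ^ 2 := by
        rw [hp, normSq_div, normSq_mul, normSq_conj, normSq_ofReal]
        ring_nf
      rw [mul_conj, mul_conj, mul_conj, mul_conj]
      norm_cast
      rw [hp2, hr, normSq_ofReal]
      rw [Real.mul_self_sqrt hrarg]
      ring

end Aux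

theorem reduce_32_24_37_39 (a₃₂ a₂₄ a₃₇ a₃₉ b₃₂ b₂₄ : ℂ) :
    ∃ L₁ L₂ L₃ : Matrix (Fin 3) (Fin 3) ℂ,
      SupportedOn L₁ {(2, 0), (2, 1)} ∧
      SupportedOn L₂ {(1, 0), (2, 1)} ∧
      SupportedOn L₃ {(1, 0)} ∧
      ∀ ρ : Matrix (Fin 3) (Fin 3) ℂ,
        (a₃₂ • E 2 0 + b₃₂ • E 2 1) * ρ * (a₃₂ • E 2 0 + b₃₂ • E 2 1)ᴴ +
        (a₂₄ • E 1 0 + b₂₄ • E 2 1) * ρ * (a₂₄ • E 1 0 + b₂₄ • E 2 1)ᴴ +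
        (a₃₇ • E 2 0) * ρ * (a₃₇ • E 2 0)ᴴ +
        (a₃₉ • E 1 0) * ρ * (a₃₉ • E 1 0)ᴴ =
        L₁ * ρ * L₁ᴴ + L₂ * ρ * L₂ᴴ + L₃ * ρ * L₃ᴴ := by
  obtain ⟨x, y, p, q, r, hA, hB, hC, hD, hE⟩ := exists_sol a₃₂ a₂₄ a₃₇ a₃₉ b₃₂ b₂₄
  exact ⟨x • E 2 0 + y • E 2 1, p • E 1 0 + q • E 2 1, r • E 1 0,
    supp20_21 x y, supp10_21 p q, supp10 r,
    fun ρ => key a₃₂ a₂₄ a₃₇ a₃₉ b₃₂ b₂₄ x y p q r hA hB hC hD hE ρ⟩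
end

section
/- Let a₈, a₁₂, a₃₈, a₃₉, b₈, b₁₂ ∈ ℂ and define the 3×3 matrices: M₁ = a₈·E₂₁ + b₈·E₂₂, M₂ = a₁₂·E₁₁ + b₁₂·E₂₂, M₃ = a₃₉·E₂₁, M₄ = a₃₈·E₁₁. Then there exist 3×3 complex matrices L₁, L₂, L₃, with L₁ supported on the entries (2,1) and (2,2), L₂ supported on the entries (1,1) and (2,2), and L₃ supported on the entry (1,1) (in particular all three are incoherent Kraus operators), such that ∑ₖ₌₁⁴ Mₖ ρ Mₖ† = ∑ₖ₌₁³ Lₖ ρ Lₖ† for all ρ ∈ M₃(ℂ). -/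
open Matrix

open ComplexConjugate in
lemma key_exists (a₈ a₁₂ a₃₈ a₃₉ b₈ b₁₂ : ℂ) :
    ∃ x y u v w : ℂ,
      x * conj x = a₈ * conj a₈ + a₃₉ * conj a₃₉ ∧
      x * conj y = a₈ * conj b₈ ∧
      y * conj y + v * conj v = b₈ * conj b₈ + b₁₂ * conj b₁₂ ∧
      u * conj v = a₁₂ * conj b₁₂ ∧
      u * conj u + w * conj w = a₁₂ * conj a₁₂ + a₃₈ * conj a₃₈ := by
  classical
  set α : ℝ := Real.sqrt (Complex.normSq a₈ + Complex.normSq a₃₉) with hα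
  have hα0 : 0 ≤ Complex.normSq a₈ + Complex.normSq a₃₉ :=
    add_nonneg (Complex.normSq_nonneg _) (Complex.normSq_nonneg _)
  have hαsq : α ^ 2 = Complex.normSq a₈ + Complex.normSq a₃₉ := Real.sq_sqrt hα0
  set y : ℂ := if α = 0 then 0 else conj a₈ * b₈ / α with hy
  have hny : Complex.normSq y ≤ Complex.normSq b₈ := by
    by_cases h : α = 0
    · simp [hy, h, Complex.normSq_nonneg]
    · have hna : Complex.normSq a₈ ≤ α ^ 2 := by
        rw [hαsq]; nlinarith [Complex.normSq_nonneg a₃₉]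
      have hαpos : 0 < α := lt_of_le_of_ne (Real.sqrt_nonneg _) (Ne.symm h)
      rw [hy, if_neg h, Complex.normSq_div, Complex.normSq_mul, Complex.normSq_conj]
      have h2 : Complex.normSq ((α : ℂ)) = α ^ 2 := by
        rw [Complex.normSq_ofReal]; ring
      rw [h2, div_le_iff₀ (by positivity)]
      nlinarith [Complex.normSq_nonneg b₈]
  set β : ℝ := Real.sqrt (Complex.normSq b₈ + Complex.normSq b₁₂ - Complex.normSq y) with hβ
  have hβ0 : 0 ≤ Complex.normSq b₈ + Complex.normSq b₁₂ - Complex.normSq y := by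
    nlinarith [Complex.normSq_nonneg b₁₂]
  have hβsq : β ^ 2 = Complex.normSq b₈ + Complex.normSq b₁₂ - Complex.normSq y :=
    Real.sq_sqrt hβ0
  set u : ℂ := if β = 0 then 0 else a₁₂ * conj b₁₂ / β with hu
  have hnu : Complex.normSq u ≤ Complex.normSq a₁₂ := by
    by_cases h : β = 0
    · simp [hu, h, Complex.normSq_nonneg]
    · have hβpos : 0 < β := lt_of_le_of_ne (Real.sqrt_nonneg _) (Ne.symm h)
      have hb : Complex.normSq b₁₂ ≤ β ^ 2 := by rw [hβsq]; nlinarith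
      rw [hu, if_neg h, Complex.normSq_div, Complex.normSq_mul, Complex.normSq_conj]
      have h2 : Complex.normSq ((β : ℂ)) = β ^ 2 := by rw [Complex.normSq_ofReal]; ring
      rw [h2, div_le_iff₀ (by positivity)]
      nlinarith [Complex.normSq_nonneg a₁₂]
  set ω : ℝ := Real.sqrt (Complex.normSq a₁₂ + Complex.normSq a₃₈ - Complex.normSq u) with hω
  have hω0 : 0 ≤ Complex.normSq a₁₂ + Complex.normSq a₃₈ - Complex.normSq u := by
    nlinarith [Complex.normSq_nonneg a₃₈]
  have hωsq : ω ^ 2 = Complex.normSq a₁₂ + Complex.normSq a₃₈ - Complex.normSq u :=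
    Real.sq_sqrt hω0
  refine ⟨(α : ℂ), y, u, (β : ℂ), (ω : ℂ), ?_, ?_, ?_, ?_, ?_⟩
  · rw [Complex.conj_ofReal, Complex.mul_conj, Complex.mul_conj]
    norm_cast
    nlinarith [hαsq]
  · by_cases h : α = 0
    · have h0 : Complex.normSq a₈ = 0 := by
        have h1 : (0:ℝ) ^ 2 = Complex.normSq a₈ + Complex.normSq a₃₉ := h ▸ hαsq
        nlinarith [Complex.normSq_nonneg a₃₉, Complex.normSq_nonneg a₈]
      have ha : a₈ = 0 := Complex.normSq_eq_zero.mp h0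
      simp [hy, h, ha]
    · rw [hy, if_neg h]
      have hac : ((α:ℂ)) ≠ 0 := Complex.ofReal_ne_zero.mpr h
      simp only [map_div₀, _root_.map_mul, Complex.conj_conj, Complex.conj_ofReal]
      field_simp
  · rw [Complex.conj_ofReal, Complex.mul_conj, Complex.mul_conj, Complex.mul_conj]
    norm_cast
    nlinarith [hβsq]
  · by_cases h : β = 0
    · have hb : Complex.normSq b₁₂ = 0 := by
        have h1 : (0:ℝ) ^ 2 = Complex.normSq b₈ + Complex.normSq b₁₂ - Complex.normSq y :=
          h ▸ hβsq
        nlinarith [Complex.normSq_nonneg b₁₂]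
      have hb0 : b₁₂ = 0 := Complex.normSq_eq_zero.mp hb
      simp [hu, h, hb0]
    · have hbc : ((β:ℂ)) ≠ 0 := Complex.ofReal_ne_zero.mpr h
      rw [hu, if_neg h, Complex.conj_ofReal]
      field_simp
  · rw [Complex.conj_ofReal, Complex.mul_conj, Complex.mul_conj, Complex.mul_conj]
    norm_cast
    nlinarith [hωsq]


set_option maxHeartbeats 1600000 in
open ComplexConjugate in
theorem reduce_8_12_39_38 (a₈ a₁₂ a₃₈ a₃₉ b₈ b₁₂ : ℂ) :
    ∃ L₁ L₂ L₃ : Matrix (Fin 3) (Fin 3) ℂ,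
      SupportedOn L₁ {(1, 0), (1, 1)} ∧
      SupportedOn L₂ {(0, 0), (1, 1)} ∧
      SupportedOn L₃ {(0, 0)} ∧
      ∀ ρ : Matrix (Fin 3) (Fin 3) ℂ,
        (a₈ • E 1 0 + b₈ • E 1 1) * ρ * (a₈ • E 1 0 + b₈ • E 1 1)ᴴ +
        (a₁₂ • E 0 0 + b₁₂ • E 1 1) * ρ * (a₁₂ • E 0 0 + b₁₂ • E 1 1)ᴴ +
        (a₃₉ • E 1 0) * ρ * (a₃₉ • E 1 0)ᴴ +
        (a₃₈ • E 0 0) * ρ * (a₃₈ • E 0 0)ᴴ =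
        L₁ * ρ * L₁ᴴ + L₂ * ρ * L₂ᴴ + L₃ * ρ * L₃ᴴ := by
  obtain ⟨x, y, u, v, w, H1, H2, H3, H4, H5⟩ := key_exists a₈ a₁₂ a₃₈ a₃₉ b₈ b₁₂
  have H2' : y * conj x = b₈ * conj a₈ := by
    have h := congrArg conj H2
    simp only [_root_.map_mul, Complex.conj_conj] at h
    linear_combination h
  have H4' : v * conj u = b₁₂ * conj a₁₂ := by
    have h := congrArg conj H4
    simp only [_root_.map_mul, Complex.conj_conj] at h
    linear_combination h
  refine ⟨x • E 1 0 + y • E 1 1, u • E 0 0 + v • E 1 1, w • E 0 0, ?_, ?_, ?_, ?_⟩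
  · intro p q h
    fin_cases p <;> fin_cases q <;>
      simp_all [E, Matrix.single, Matrix.add_apply, Matrix.smul_apply]
  · intro p q h
    fin_cases p <;> fin_cases q <;>
      simp_all [E, Matrix.single, Matrix.add_apply, Matrix.smul_apply]
  · intro p q h
    fin_cases p <;> fin_cases q <;>
      simp_all [E, Matrix.single, Matrix.add_apply, Matrix.smul_apply]
  · intro ρ
    ext i j
    fin_cases i <;> fin_cases j <;>
      simp [E, Matrix.mul_apply, Matrix.single, Fin.sum_univ_three,
        Matrix.conjTranspose_apply, Matrix.add_apply, Matrix.smul_apply]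
    all_goals
      first
        | linear_combination (-(ρ 0 0)) * H5
        | linear_combination (-(ρ 0 1)) * H4
        | linear_combination (-(ρ 1 0)) * H4'
        | linear_combination (-(ρ 0 0)) * H1 - ρ 0 1 * H2 - ρ 1 0 * H2' - ρ 1 1 * H3
end

section
/- Let a₄, a₈, a₁₂, a₁₆, a₃₈, b₄, b₈, b₁₂, b₁₆ ∈ ℂ and define the 3×3 matrices: M₁ = a₄·E₁₁ + b₄·E₁₂, M₂ = a₈·E₂₁ + b₈·E₂₂, M₃ = a₃₈·E₁₁, M₄ = b₁₆·E₁₂ + a₁₆·E₂₁, M₅ = a₁₂·E₁₁ + b₁₂·E₂₂. Then there exist 3×3 complex matrices L₁, L₂, L₃, L₄, with L₁ supported on the entries (1,1) and (1,2), L₂ supported on the entries (2,1) and (2,2), L₃ supported on the entries (1,1) and (2,2), and L₄ supported on the entries (1,2) and (2,1) (in particular all four are incoherent Kraus operators), such that ∑ₖ₌₁⁵ Mₖ ρ Mₖ† = ∑ₖ₌₁⁴ Lₖ ρ Lₖ† for all ρ ∈ M₃(ℂ). -/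
open Matrix

lemma step (a b d : ℝ) (ha : 0 ≤ a) (hb : 0 ≤ b) (hd : 0 ≤ d) :
    ∃ a', 0 ≤ a' ∧ a' ≤ a ∧ a' * (b + d) = a * b ∧ (a * d = 0 → a' = a) := by
  rcases eq_or_lt_of_le (add_nonneg hb hd) with h | h
  · refine ⟨a, ha, le_refl a, ?_, fun _ => rfl⟩
    have hb0 : b = 0 := by nlinarith
    rw [← h, hb0]
  · refine ⟨a * b / (b + d), by positivity, ?_, ?_, ?_⟩
    · rw [div_le_iff₀ h]; nlinarith
    · field_simp
    · rintro had
      rcases mul_eq_zero.mp had with h0 | h0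
      · simp [h0]
      · rw [h0, add_zero, mul_div_assoc]
        have hb' : b ≠ 0 := by rw [h0, add_zero] at h; linarith
        rw [div_self hb', mul_one]

lemma cycle (p1 p2 q1 q2 r1 r2 s1 s2 e : ℝ)
    (hp1 : 0 ≤ p1) (hp2 : 0 ≤ p2) (hq1 : 0 ≤ q1) (hq2 : 0 ≤ q2)
    (hr1 : 0 ≤ r1) (hr2 : 0 ≤ r2) (hs1 : 0 ≤ s1) (hs2 : 0 ≤ s2) (he : 0 ≤ e) :
    ∃ A1 A2 B1 B2 C1 C2 D1 D2 : ℝ,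
      0 ≤ A1 ∧ 0 ≤ A2 ∧ 0 ≤ B1 ∧ 0 ≤ B2 ∧ 0 ≤ C1 ∧ 0 ≤ C2 ∧ 0 ≤ D1 ∧ 0 ≤ D2 ∧
      A1 + A2 = p1 + e + s2 ∧ B1 + B2 = p2 + q1 ∧ C1 + C2 = q2 + r1 ∧
      D1 + D2 = r2 + s1 ∧
      A1 * B1 = p1 * p2 ∧ B2 * C1 = q1 * q2 ∧ C2 * D1 = r1 * r2 ∧
      D2 * A2 = s1 * s2 := by
  by_cases hcw : p2 = 0 ∨ q2 = 0 ∨ r2 = 0 ∨ s2 = 0 ∨ e = 0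
  · -- clockwise chain: A1 = p1 + e, propagate slack, it dies at a zero
    obtain ⟨B1, hB1n, hB1le, hB1p, hB1eq⟩ := step p2 p1 e hp2 hp1 he
    obtain ⟨C1, hC1n, hC1le, hC1p, hC1eq⟩ :=
      step q2 q1 (p2 - B1) hq2 hq1 (by linarith)
    obtain ⟨D1, hD1n, hD1le, hD1p, hD1eq⟩ :=
      step r2 r1 (q2 - C1) hr2 hr1 (by linarith)
    obtain ⟨A2, hA2n, hA2le, hA2p, hA2eq⟩ :=
      step s2 s1 (r2 - D1) hs2 hs1 (by linarith)
    have hA2s : A2 = s2 := by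
      have key : r2 - D1 = 0 ∨ s2 = 0 := by
        have key2 : q2 - C1 = 0 ∨ r2 = 0 ∨ s2 = 0 := by
          have key3 : p2 - B1 = 0 ∨ q2 = 0 ∨ r2 = 0 ∨ s2 = 0 := by
            rcases hcw with h | h | h | h | h
            · left; have : B1 ≤ 0 := h ▸ hB1le; linarith
            · right; left; exact h
            · right; right; left; exact h
            · right; right; right; exact h
            · left; rw [hB1eq (by rw [h]; ring)]; ring
          rcases key3 with h | h | h | h
          · left; rw [hC1eq (by rw [h]; ring)]; ring
          · left; have : C1 ≤ 0 := h ▸ hC1le; linarith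
          · right; left; exact h
          · right; right; exact h
        rcases key2 with h | h | h
        · left; rw [hD1eq (by rw [h]; ring)]; ring
        · left; have : D1 ≤ 0 := h ▸ hD1le; linarith
        · right; exact h
      rcases key with h | h
      · exact hA2eq (by rw [h]; ring)
      · have : A2 ≤ 0 := h ▸ hA2le; linarith
    refine ⟨p1 + e, A2, B1, p2 + q1 - B1, C1, q2 + r1 - C1, D1, r2 + s1 - D1,
      by linarith, hA2n, hB1n, by linarith, hC1n, by linarith, hD1n, by linarith,
      by rw [hA2s], by ring, by ring, by ring, ?_, ?_, ?_, ?_⟩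
    · linear_combination hB1p
    · linear_combination hC1p
    · linear_combination hD1p
    · linear_combination hA2p
  · push_neg at hcw
    obtain ⟨hp2', hq2', hr2', hs2', he'⟩ := hcw
    by_cases hccw : p1 = 0 ∨ q1 = 0 ∨ r1 = 0 ∨ s1 = 0
    · -- counterclockwise chain: A2 = s2 + e
      obtain ⟨D2, hD2n, hD2le, hD2p, hD2eq⟩ := step s1 s2 e hs1 hs2 he
      obtain ⟨C2, hC2n, hC2le, hC2p, hC2eq⟩ :=
        step r1 r2 (s1 - D2) hr1 hr2 (by linarith)
      obtain ⟨B2, hB2n, hB2le, hB2p, hB2eq⟩ :=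
        step q1 q2 (r1 - C2) hq1 hq2 (by linarith)
      obtain ⟨A1, hA1n, hA1le, hA1p, hA1eq⟩ :=
        step p1 p2 (q1 - B2) hp1 hp2 (by linarith)
      have hA1s : A1 = p1 := by
        have key : q1 - B2 = 0 ∨ p1 = 0 := by
          have key2 : r1 - C2 = 0 ∨ q1 = 0 ∨ p1 = 0 := by
            have key3 : s1 - D2 = 0 ∨ r1 = 0 ∨ q1 = 0 ∨ p1 = 0 := by
              rcases hccw with h | h | h | h
              · right; right; right; exact h
              · right; right; left; exact h
              · right; left; exact h
              · left; have : D2 ≤ 0 := h ▸ hD2le; linarith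
            rcases key3 with h | h | h | h
            · left; rw [hC2eq (by rw [h]; ring)]; ring
            · left; have : C2 ≤ 0 := h ▸ hC2le; linarith
            · right; left; exact h
            · right; right; exact h
          rcases key2 with h | h | h
          · left; rw [hB2eq (by rw [h]; ring)]; ring
          · left; have : B2 ≤ 0 := h ▸ hB2le; linarith
          · right; exact h
        rcases key with h | h
        · exact hA1eq (by rw [h]; ring)
        · have : A1 ≤ 0 := h ▸ hA1le; linarith
      refine ⟨A1, s2 + e, p2 + q1 - B2, B2, q2 + r1 - C2, C2, r2 + s1 - D2, D2,
        hA1n, by linarith, by linarith, hB2n, by linarith, hC2n, by linarith, hD2n,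
        by rw [hA1s]; ring, by ring, by ring, by ring, ?_, ?_, ?_, ?_⟩
      · linear_combination hA1p
      · linear_combination hB2p
      · linear_combination hC2p
      · linear_combination hD2p
    · push_neg at hccw
      obtain ⟨hp1', hq1', hr1', hs1'⟩ := hccw
      -- all strictly positive: intermediate value theorem
      have Pp1 : 0 < p1 := lt_of_le_of_ne hp1 (Ne.symm hp1')
      have Pp2 : 0 < p2 := lt_of_le_of_ne hp2 (Ne.symm hp2')
      have Pq1 : 0 < q1 := lt_of_le_of_ne hq1 (Ne.symm hq1')
      have Pq2 : 0 < q2 := lt_of_le_of_ne hq2 (Ne.symm hq2')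
      have Pr1 : 0 < r1 := lt_of_le_of_ne hr1 (Ne.symm hr1')
      have Pr2 : 0 < r2 := lt_of_le_of_ne hr2 (Ne.symm hr2')
      have Ps1 : 0 < s1 := lt_of_le_of_ne hs1 (Ne.symm hs1')
      have Ps2 : 0 < s2 := lt_of_le_of_ne hs2 (Ne.symm hs2')
      have Pe : 0 < e := lt_of_le_of_ne he (Ne.symm he')
      set L : ℝ := (p1 + e + s2) / p1 with hLdef
      have hL : 1 ≤ L := by rw [hLdef, le_div_iff₀ Pp1]; linarith
      set Sc : Set ℝ := Set.Icc 1 L with hScdef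
      let f1 : ℝ → ℝ := fun x => p2 + q1 - p2 / x
      let f2 : ℝ → ℝ := fun x => q2 + r1 - q1 * q2 / f1 x
      let f3 : ℝ → ℝ := fun x => r2 + s1 - r1 * r2 / f2 x
      let g : ℝ → ℝ := fun x => x * p1 + s1 * s2 / f3 x
      have hf1def : ∀ x, f1 x = p2 + q1 - p2 / x := fun _ => rfl
      have hf2def : ∀ x, f2 x = q2 + r1 - q1 * q2 / f1 x := fun _ => rfl
      have hf3def : ∀ x, f3 x = r2 + s1 - r1 * r2 / f2 x := fun _ => rfl
      have hgdef : ∀ x, g x = x * p1 + s1 * s2 / f3 x := fun _ => rfl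
      have hb1 : ∀ x ∈ Sc, (0:ℝ) < x := fun x hx => lt_of_lt_of_le zero_lt_one hx.1
      have hb2 : ∀ x ∈ Sc, q1 ≤ f1 x := by
        intro x hx
        have h1 : p2 / x ≤ p2 := div_le_self hp2 hx.1
        rw [hf1def]; linarith
      have hb2' : ∀ x ∈ Sc, 0 < f1 x := fun x hx => lt_of_lt_of_le Pq1 (hb2 x hx)
      have hb3 : ∀ x ∈ Sc, r1 ≤ f2 x := by
        intro x hx
        have h1 : q1 * q2 / f1 x ≤ q2 := by
          rw [div_le_iff₀ (hb2' x hx)]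
          nlinarith [hb2 x hx]
        rw [hf2def]; linarith
      have hb3' : ∀ x ∈ Sc, 0 < f2 x := fun x hx => lt_of_lt_of_le Pr1 (hb3 x hx)
      have hb4 : ∀ x ∈ Sc, s1 ≤ f3 x := by
        intro x hx
        have h1 : r1 * r2 / f2 x ≤ r2 := by
          rw [div_le_iff₀ (hb3' x hx)]
          nlinarith [hb3 x hx]
        rw [hf3def]; linarith
      have hb4' : ∀ x ∈ Sc, 0 < f3 x := fun x hx => lt_of_lt_of_le Ps1 (hb4 x hx)
      have cf1 : ContinuousOn f1 Sc :=
        ContinuousOn.sub continuousOn_const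
          (ContinuousOn.div continuousOn_const continuousOn_id
            (fun x hx => ne_of_gt (hb1 x hx)))
      have cf2 : ContinuousOn f2 Sc :=
        ContinuousOn.sub continuousOn_const
          (ContinuousOn.div continuousOn_const cf1
            (fun x hx => ne_of_gt (hb2' x hx)))
      have cf3 : ContinuousOn f3 Sc :=
        ContinuousOn.sub continuousOn_const
          (ContinuousOn.div continuousOn_const cf2
            (fun x hx => ne_of_gt (hb3' x hx)))
      have cg : ContinuousOn g Sc :=
        ContinuousOn.add ((continuous_id.mul continuous_const).continuousOn)
          (ContinuousOn.div continuousOn_const cf3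
            (fun x hx => ne_of_gt (hb4' x hx)))
      have e1 : f1 1 = q1 := by rw [hf1def, div_one]; ring
      have e2 : f2 1 = r1 := by
        rw [hf2def, e1, mul_div_cancel_left₀ _ hq1']; ring
      have e3 : f3 1 = s1 := by
        rw [hf3def, e2, mul_div_cancel_left₀ _ hr1']; ring
      have hg1 : g 1 = p1 + s2 := by
        rw [hgdef, e3, mul_div_cancel_left₀ _ hs1']; ring
      have hLS : L ∈ Sc := ⟨hL, le_refl L⟩
      have hgL : p1 + e + s2 ≤ g L := by
        have h1 : 0 ≤ s1 * s2 / f3 L := le_of_lt (div_pos (by positivity) (hb4' L hLS))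
        have h2 : L * p1 = p1 + e + s2 := by
          rw [hLdef]; field_simp
        rw [hgdef]; linarith
      have hsub := intermediate_value_Icc hL cg
      have hmem : p1 + e + s2 ∈ Set.Icc (g 1) (g L) := ⟨by rw [hg1]; linarith, hgL⟩
      obtain ⟨x, hxS, hgx⟩ := hsub hmem
      have hx0 : (0:ℝ) < x := hb1 x hxS
      refine ⟨x * p1, s1 * s2 / f3 x, p2 / x, f1 x,
        q1 * q2 / f1 x, f2 x, r1 * r2 / f2 x, f3 x,
        by positivity, le_of_lt (div_pos (by positivity) (hb4' x hxS)),
        by positivity, le_of_lt (hb2' x hxS),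
        le_of_lt (div_pos (by positivity) (hb2' x hxS)), le_of_lt (hb3' x hxS),
        le_of_lt (div_pos (by positivity) (hb3' x hxS)), le_of_lt (hb4' x hxS),
        ?_, ?_, ?_, ?_, ?_, ?_, ?_, ?_⟩
      · rw [← hgx, hgdef]
      · rw [hf1def]; field_simp; ring
      · rw [hf2def]; ring
      · rw [hf3def]; ring
      · field_simp
      · rw [mul_comm, div_mul_cancel₀ _ (ne_of_gt (hb2' x hxS))]
      · rw [mul_comm, div_mul_cancel₀ _ (ne_of_gt (hb3' x hxS))]
      · rw [mul_comm, div_mul_cancel₀ _ (ne_of_gt (hb4' x hxS)), mul_comm]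


lemma recon (c : ℂ) (A B : ℝ) (hA : 0 ≤ A) (hB : 0 ≤ B)
    (h : A * B = Complex.normSq c) :
    ∃ x y : ℂ, Complex.normSq x = A ∧ Complex.normSq y = B ∧
      x * (starRingEnd ℂ) y = c := by
  rcases eq_or_lt_of_le hA with hA0 | hA0
  · have hc : c = 0 := by
      have h0 : Complex.normSq c = 0 := by rw [← h, ← hA0]; ring
      exact Complex.normSq_eq_zero.mp h0
    refine ⟨0, (Real.sqrt B : ℝ), by simp [← hA0], ?_, by simp [hc]⟩
    rw [Complex.normSq_ofReal, Real.mul_self_sqrt hB]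
  · refine ⟨(Real.sqrt A : ℝ), (starRingEnd ℂ) c / (Real.sqrt A : ℝ), ?_, ?_, ?_⟩
    · rw [Complex.normSq_ofReal, Real.mul_self_sqrt hA]
    · rw [Complex.normSq_div, Complex.normSq_conj, Complex.normSq_ofReal,
        Real.mul_self_sqrt hA, ← h, mul_comm,
        mul_div_assoc, div_self (ne_of_gt hA0), mul_one]
    · rw [map_div₀, Complex.conj_conj, Complex.conj_ofReal]
      rw [mul_div_assoc', mul_comm, mul_div_assoc]
      have : (Real.sqrt A : ℂ) / (Real.sqrt A : ℂ) = 1 := by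
        apply div_self
        simp only [ne_eq, Complex.ofReal_eq_zero]
        positivity
      rw [this, mul_one]



lemma supp2 (c d : ℂ) (i1 j1 i2 j2 : Fin 3) :
    SupportedOn (c • E i1 j1 + d • E i2 j2) {(i1, j1), (i2, j2)} := by
  intro p q hpq
  by_contra hmem
  apply hpq
  simp only [Set.mem_insert_iff, Set.mem_singleton_iff, Prod.mk.injEq, not_or,
    not_and] at hmem
  have e1 : ¬(i1 = p ∧ j1 = q) := fun ⟨h, h'⟩ => hmem.1 h.symm h'.symm
  have e2 : ¬(i2 = p ∧ j2 = q) := fun ⟨h, h'⟩ => hmem.2 h.symm h'.symm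
  simp [E, Matrix.single, e1, e2]

lemma key_s5 (a₄ a₈ a₁₂ a₁₆ a₃₈ b₄ b₈ b₁₂ b₁₆ x1 y1 x2 y2 x3 y3 x4 w4 : ℂ)
    (h1 : x1 * (starRingEnd ℂ) x1 + x3 * (starRingEnd ℂ) x3
        = a₄ * (starRingEnd ℂ) a₄ + a₃₈ * (starRingEnd ℂ) a₃₈ + a₁₂ * (starRingEnd ℂ) a₁₂)
    (h2 : x1 * (starRingEnd ℂ) y1 = a₄ * (starRingEnd ℂ) b₄)
    (h3 : y1 * (starRingEnd ℂ) y1 + x4 * (starRingEnd ℂ) x4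
        = b₄ * (starRingEnd ℂ) b₄ + b₁₆ * (starRingEnd ℂ) b₁₆)
    (h4 : x4 * (starRingEnd ℂ) w4 = b₁₆ * (starRingEnd ℂ) a₁₆)
    (h5 : x2 * (starRingEnd ℂ) x2 + w4 * (starRingEnd ℂ) w4
        = a₈ * (starRingEnd ℂ) a₈ + a₁₆ * (starRingEnd ℂ) a₁₆)
    (h6 : x2 * (starRingEnd ℂ) y2 = a₈ * (starRingEnd ℂ) b₈)
    (h7 : y2 * (starRingEnd ℂ) y2 + y3 * (starRingEnd ℂ) y3
        = b₈ * (starRingEnd ℂ) b₈ + b₁₂ * (starRingEnd ℂ) b₁₂)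
    (h8 : x3 * (starRingEnd ℂ) y3 = a₁₂ * (starRingEnd ℂ) b₁₂)
    (ρ : Matrix (Fin 3) (Fin 3) ℂ) :
        (a₄ • E 0 0 + b₄ • E 0 1) * ρ * (a₄ • E 0 0 + b₄ • E 0 1)ᴴ +
        (a₈ • E 1 0 + b₈ • E 1 1) * ρ * (a₈ • E 1 0 + b₈ • E 1 1)ᴴ +
        (a₃₈ • E 0 0) * ρ * (a₃₈ • E 0 0)ᴴ +
        (b₁₆ • E 0 1 + a₁₆ • E 1 0) * ρ * (b₁₆ • E 0 1 + a₁₆ • E 1 0)ᴴ +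
        (a₁₂ • E 0 0 + b₁₂ • E 1 1) * ρ * (a₁₂ • E 0 0 + b₁₂ • E 1 1)ᴴ =
        (x1 • E 0 0 + y1 • E 0 1) * ρ * (x1 • E 0 0 + y1 • E 0 1)ᴴ +
        (x2 • E 1 0 + y2 • E 1 1) * ρ * (x2 • E 1 0 + y2 • E 1 1)ᴴ +
        (x3 • E 0 0 + y3 • E 1 1) * ρ * (x3 • E 0 0 + y3 • E 1 1)ᴴ +
        (x4 • E 0 1 + w4 • E 1 0) * ρ * (x4 • E 0 1 + w4 • E 1 0)ᴴ := by
  have h2' := congrArg (starRingEnd ℂ) h2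
  have h4' := congrArg (starRingEnd ℂ) h4
  have h6' := congrArg (starRingEnd ℂ) h6
  have h8' := congrArg (starRingEnd ℂ) h8
  simp only [_root_.map_mul, Complex.conj_conj] at h2' h4' h6' h8'
  ext i j
  fin_cases i <;> fin_cases j <;>
    simp [Matrix.mul_apply, Matrix.conjTranspose_apply, Matrix.add_apply,
      Matrix.smul_apply, E, Matrix.single, Fin.sum_univ_three,
      smul_eq_mul, Matrix.of_apply]
  · linear_combination -(ρ 0 0 * h1 + ρ 0 1 * h2 + ρ 1 0 * h2' + ρ 1 1 * h3)
  · linear_combination -(ρ 0 1 * h8 + ρ 1 0 * h4)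
  · linear_combination -(ρ 0 1 * h4' + ρ 1 0 * h8')
  · linear_combination -(ρ 0 0 * h5 + ρ 0 1 * h6 + ρ 1 0 * h6' + ρ 1 1 * h7)

theorem reduce_4_8_38_16_12 (a₄ a₈ a₁₂ a₁₆ a₃₈ b₄ b₈ b₁₂ b₁₆ : ℂ) :
    ∃ L₁ L₂ L₃ L₄ : Matrix (Fin 3) (Fin 3) ℂ,
      SupportedOn L₁ {(0, 0), (0, 1)} ∧
      SupportedOn L₂ {(1, 0), (1, 1)} ∧
      SupportedOn L₃ {(0, 0), (1, 1)} ∧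
      SupportedOn L₄ {(0, 1), (1, 0)} ∧
      ∀ ρ : Matrix (Fin 3) (Fin 3) ℂ,
        (a₄ • E 0 0 + b₄ • E 0 1) * ρ * (a₄ • E 0 0 + b₄ • E 0 1)ᴴ +
        (a₈ • E 1 0 + b₈ • E 1 1) * ρ * (a₈ • E 1 0 + b₈ • E 1 1)ᴴ +
        (a₃₈ • E 0 0) * ρ * (a₃₈ • E 0 0)ᴴ +
        (b₁₆ • E 0 1 + a₁₆ • E 1 0) * ρ * (b₁₆ • E 0 1 + a₁₆ • E 1 0)ᴴ +
        (a₁₂ • E 0 0 + b₁₂ • E 1 1) * ρ * (a₁₂ • E 0 0 + b₁₂ • E 1 1)ᴴ =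
        L₁ * ρ * L₁ᴴ + L₂ * ρ * L₂ᴴ + L₃ * ρ * L₃ᴴ + L₄ * ρ * L₄ᴴ := by
  obtain ⟨A1, A2, B1, B2, C1, C2, D1, D2, hA1, hA2, hB1, hB2, hC1, hC2, hD1, hD2,
      sA, sB, sC, sD, pP, pQ, pR, pS⟩ :=
    cycle (Complex.normSq a₄) (Complex.normSq b₄) (Complex.normSq b₁₆)
      (Complex.normSq a₁₆) (Complex.normSq a₈) (Complex.normSq b₈)
      (Complex.normSq b₁₂) (Complex.normSq a₁₂) (Complex.normSq a₃₈)
      (Complex.normSq_nonneg _) (Complex.normSq_nonneg _) (Complex.normSq_nonneg _)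
      (Complex.normSq_nonneg _) (Complex.normSq_nonneg _) (Complex.normSq_nonneg _)
      (Complex.normSq_nonneg _) (Complex.normSq_nonneg _) (Complex.normSq_nonneg _)
  obtain ⟨x1, y1, hx1, hy1, h2⟩ := recon (a₄ * (starRingEnd ℂ) b₄) A1 B1 hA1 hB1
    (by rw [Complex.normSq_mul, Complex.normSq_conj]; linear_combination pP)
  obtain ⟨x4, w4, hx4, hw4, h4⟩ := recon (b₁₆ * (starRingEnd ℂ) a₁₆) B2 C1 hB2 hC1
    (by rw [Complex.normSq_mul, Complex.normSq_conj]; linear_combination pQ)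
  obtain ⟨x2, y2, hx2, hy2, h6⟩ := recon (a₈ * (starRingEnd ℂ) b₈) C2 D1 hC2 hD1
    (by rw [Complex.normSq_mul, Complex.normSq_conj]; linear_combination pR)
  obtain ⟨x3, y3, hx3, hy3, h8⟩ := recon (a₁₂ * (starRingEnd ℂ) b₁₂) A2 D2 hA2 hD2
    (by rw [Complex.normSq_mul, Complex.normSq_conj]; linear_combination pS)
  have h1 : x1 * (starRingEnd ℂ) x1 + x3 * (starRingEnd ℂ) x3
      = a₄ * (starRingEnd ℂ) a₄ + a₃₈ * (starRingEnd ℂ) a₃₈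
        + a₁₂ * (starRingEnd ℂ) a₁₂ := by
    simp only [Complex.mul_conj]; norm_cast; rw [hx1, hx3]; linarith
  have h3 : y1 * (starRingEnd ℂ) y1 + x4 * (starRingEnd ℂ) x4
      = b₄ * (starRingEnd ℂ) b₄ + b₁₆ * (starRingEnd ℂ) b₁₆ := by
    simp only [Complex.mul_conj]; norm_cast; rw [hy1, hx4]; linarith
  have h5 : x2 * (starRingEnd ℂ) x2 + w4 * (starRingEnd ℂ) w4
      = a₈ * (starRingEnd ℂ) a₈ + a₁₆ * (starRingEnd ℂ) a₁₆ := by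
    simp only [Complex.mul_conj]; norm_cast; rw [hx2, hw4]; linarith
  have h7 : y2 * (starRingEnd ℂ) y2 + y3 * (starRingEnd ℂ) y3
      = b₈ * (starRingEnd ℂ) b₈ + b₁₂ * (starRingEnd ℂ) b₁₂ := by
    simp only [Complex.mul_conj]; norm_cast; rw [hy2, hy3]; linarith
  refine ⟨x1 • E 0 0 + y1 • E 0 1, x2 • E 1 0 + y2 • E 1 1,
      x3 • E 0 0 + y3 • E 1 1, x4 • E 0 1 + w4 • E 1 0,
      supp2 x1 y1 0 0 0 1, supp2 x2 y2 1 0 1 1, supp2 x3 y3 0 0 1 1,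
      supp2 x4 w4 0 1 1 0,
      key_s5 a₄ a₈ a₁₂ a₁₆ a₃₈ b₄ b₈ b₁₂ b₁₆ x1 y1 x2 y2 x3 y3 x4 w4
        h1 h2 h3 h4 h5 h6 h7 h8⟩
end

section
/- Let a₉, a₁₂, a₁₄, a₁₅, b₉, b₁₂ ∈ ℂ and define the 3×3 matrices: M₁ = b₉·E₁₂ + a₉·E₂₁, M₂ = b₁₂·E₁₂ + a₁₂·E₃₁, M₃ = a₁₄·E₂₁, M₄ = a₁₅·E₃₁. Then there exist 3×3 complex matrices L₁, L₂, L₃, with L₁ supported on the entries (1,2) and (2,1), L₂ supported on the entries (1,2) and (3,1), and L₃ supported on the entry (2,1) (in particular all three are strictly incoherent Kraus operators), such that ∑ₖ₌₁⁴ Mₖ ρ Mₖ† = ∑ₖ₌₁³ Lₖ ρ Lₖ† for all ρ ∈ M₃(ℂ). -/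
open Matrix

private lemma key_lemma (a₉ a₁₂ a₁₄ a₁₅ b₉ b₁₂ β₁ α₁ β₂ α₂ α₃ : ℂ)
    (hA : β₁ * (starRingEnd ℂ) β₁ + β₂ * (starRingEnd ℂ) β₂
        = b₉ * (starRingEnd ℂ) b₉ + b₁₂ * (starRingEnd ℂ) b₁₂)
    (hB : α₁ * (starRingEnd ℂ) α₁ + α₃ * (starRingEnd ℂ) α₃
        = a₉ * (starRingEnd ℂ) a₉ + a₁₄ * (starRingEnd ℂ) a₁₄)
    (hC : α₂ * (starRingEnd ℂ) α₂ = a₁₂ * (starRingEnd ℂ) a₁₂ + a₁₅ * (starRingEnd ℂ) a₁₅)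
    (hD : β₁ * (starRingEnd ℂ) α₁ = b₉ * (starRingEnd ℂ) a₉)
    (hE : β₂ * (starRingEnd ℂ) α₂ = b₁₂ * (starRingEnd ℂ) a₁₂)
    (ρ : Matrix (Fin 3) (Fin 3) ℂ) :
    (b₉ • E 0 1 + a₉ • E 1 0) * ρ * (b₉ • E 0 1 + a₉ • E 1 0)ᴴ +
    (b₁₂ • E 0 1 + a₁₂ • E 2 0) * ρ * (b₁₂ • E 0 1 + a₁₂ • E 2 0)ᴴ +
    (a₁₄ • E 1 0) * ρ * (a₁₄ • E 1 0)ᴴ +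
    (a₁₅ • E 2 0) * ρ * (a₁₅ • E 2 0)ᴴ =
    (β₁ • E 0 1 + α₁ • E 1 0) * ρ * (β₁ • E 0 1 + α₁ • E 1 0)ᴴ +
    (β₂ • E 0 1 + α₂ • E 2 0) * ρ * (β₂ • E 0 1 + α₂ • E 2 0)ᴴ +
    (α₃ • E 1 0) * ρ * (α₃ • E 1 0)ᴴ := by
  have hD' : (starRingEnd ℂ) β₁ * α₁ = (starRingEnd ℂ) b₉ * a₉ := by
    have := congrArg (starRingEnd ℂ) hD; simpa [mul_comm] using this
  have hE' : (starRingEnd ℂ) β₂ * α₂ = (starRingEnd ℂ) b₁₂ * a₁₂ := by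
    have := congrArg (starRingEnd ℂ) hE; simpa [mul_comm] using this
  ext i j
  fin_cases i <;> fin_cases j <;>
    simp [E, Matrix.mul_apply, Fin.sum_univ_succ, Matrix.single,
      Matrix.conjTranspose_apply]
  · linear_combination -ρ 1 1 * hA
  · linear_combination -ρ 1 0 * hD
  · linear_combination -ρ 1 0 * hE
  · linear_combination -ρ 0 1 * hD'
  · linear_combination -ρ 0 0 * hB
  · linear_combination -ρ 0 1 * hE'
  · linear_combination -ρ 0 0 * hC

private lemma supp_aux₁ (x y : ℂ) :
    SupportedOn (x • E 0 1 + y • E 1 0) {(0, 1), (1, 0)} := by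
  intro p q h
  fin_cases p <;> fin_cases q <;>
    simp [E, Matrix.single] at h ⊢

private lemma supp_aux₂ (x y : ℂ) :
    SupportedOn (x • E 0 1 + y • E 2 0) {(0, 1), (2, 0)} := by
  intro p q h
  fin_cases p <;> fin_cases q <;>
    simp [E, Matrix.single] at h ⊢

private lemma supp_aux₃ (y : ℂ) :
    SupportedOn (y • E 1 0) {(1, 0)} := by
  intro p q h
  fin_cases p <;> fin_cases q <;>
    simp [E, Matrix.single] at h ⊢

theorem reduce_9_12_14_15 (a₉ a₁₂ a₁₄ a₁₅ b₉ b₁₂ : ℂ) :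
    ∃ L₁ L₂ L₃ : Matrix (Fin 3) (Fin 3) ℂ,
      SupportedOn L₁ {(0, 1), (1, 0)} ∧
      SupportedOn L₂ {(0, 1), (2, 0)} ∧
      SupportedOn L₃ {(1, 0)} ∧
      ∀ ρ : Matrix (Fin 3) (Fin 3) ℂ,
        (b₉ • E 0 1 + a₉ • E 1 0) * ρ * (b₉ • E 0 1 + a₉ • E 1 0)ᴴ +
        (b₁₂ • E 0 1 + a₁₂ • E 2 0) * ρ * (b₁₂ • E 0 1 + a₁₂ • E 2 0)ᴴ +
        (a₁₄ • E 1 0) * ρ * (a₁₄ • E 1 0)ᴴ +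
        (a₁₅ • E 2 0) * ρ * (a₁₅ • E 2 0)ᴴ =
        L₁ * ρ * L₁ᴴ + L₂ * ρ * L₂ᴴ + L₃ * ρ * L₃ᴴ := by
  classical
  set A : ℝ := Complex.normSq a₁₂ + Complex.normSq a₁₅ with hAdef
  have hA0 : 0 ≤ A := add_nonneg (Complex.normSq_nonneg _) (Complex.normSq_nonneg _)
  set s : ℝ := Real.sqrt A with hsdef
  set α₂ : ℂ := (s : ℂ) with hα₂def
  set β₂ : ℂ := if s = 0 then 0 else b₁₂ * (starRingEnd ℂ) a₁₂ / (s : ℂ) with hβ₂def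
  -- normSq β₂ ≤ normSq b₁₂
  have hss : s * s = A := Real.mul_self_sqrt hA0
  have hβ₂le : Complex.normSq β₂ ≤ Complex.normSq b₁₂ := by
    by_cases hs : s = 0
    · simp [hβ₂def, hs, Complex.normSq_nonneg]
    · have hApos : 0 < A := by
        rcases lt_or_eq_of_le hA0 with h | h
        · exact h
        · exact absurd (by rw [hsdef, ← h, Real.sqrt_zero]) hs
      rw [hβ₂def, if_neg hs]
      rw [Complex.normSq_div, Complex.normSq_mul, Complex.normSq_conj,
        Complex.normSq_ofReal, hss]
      rw [div_le_iff₀ hApos]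
      have h1 : Complex.normSq a₁₂ ≤ A := le_add_of_nonneg_right (Complex.normSq_nonneg _)
      calc Complex.normSq b₁₂ * Complex.normSq a₁₂
          ≤ Complex.normSq b₁₂ * A :=
            mul_le_mul_of_nonneg_left h1 (Complex.normSq_nonneg _)
        _ = Complex.normSq b₁₂ * A := rfl
  set r : ℝ := Complex.normSq b₉ + Complex.normSq b₁₂ - Complex.normSq β₂ with hrdef
  have hb₉r : Complex.normSq b₉ ≤ r := by
    rw [hrdef]; linarith
  have hr0 : 0 ≤ r := le_trans (Complex.normSq_nonneg _) hb₉r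
  set β₁ : ℂ := ((Real.sqrt r : ℝ) : ℂ) with hβ₁def
  have hβ₁sq : Complex.normSq β₁ = r := by
    rw [hβ₁def, Complex.normSq_ofReal, Real.mul_self_sqrt hr0]
  set α₁ : ℂ := if β₁ = 0 then 0 else (starRingEnd ℂ) b₉ * a₉ / β₁ with hα₁def
  have hα₁le : Complex.normSq α₁ ≤ Complex.normSq a₉ := by
    by_cases hb : β₁ = 0
    · simp [hα₁def, hb, Complex.normSq_nonneg]
    · have hrpos : 0 < r := by
        rcases lt_or_eq_of_le hr0 with h | h
        · exact h
        · exact absurd (by rw [hβ₁def, ← h, Real.sqrt_zero, Complex.ofReal_zero]) hb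
      rw [hα₁def, if_neg hb]
      rw [Complex.normSq_div, Complex.normSq_mul, Complex.normSq_conj, hβ₁sq]
      rw [div_le_iff₀ hrpos]
      calc Complex.normSq b₉ * Complex.normSq a₉
          ≤ r * Complex.normSq a₉ :=
            mul_le_mul_of_nonneg_right hb₉r (Complex.normSq_nonneg _)
        _ = Complex.normSq a₉ * r := mul_comm _ _
  set t : ℝ := Complex.normSq a₉ + Complex.normSq a₁₄ - Complex.normSq α₁ with htdef
  have ht0 : 0 ≤ t := by rw [htdef]; have := Complex.normSq_nonneg a₁₄; linarith
  set α₃ : ℂ := ((Real.sqrt t : ℝ) : ℂ) with hα₃def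
  -- the five scalar identities
  have hA : β₁ * (starRingEnd ℂ) β₁ + β₂ * (starRingEnd ℂ) β₂
      = b₉ * (starRingEnd ℂ) b₉ + b₁₂ * (starRingEnd ℂ) b₁₂ := by
    rw [Complex.mul_conj, Complex.mul_conj, Complex.mul_conj, Complex.mul_conj, hβ₁sq]
    rw [← Complex.ofReal_add, ← Complex.ofReal_add]
    congr 1
    rw [hrdef]; ring
  have hB : α₁ * (starRingEnd ℂ) α₁ + α₃ * (starRingEnd ℂ) α₃
      = a₉ * (starRingEnd ℂ) a₉ + a₁₄ * (starRingEnd ℂ) a₁₄ := by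
    rw [Complex.mul_conj, Complex.mul_conj, Complex.mul_conj, Complex.mul_conj]
    rw [hα₃def, Complex.normSq_ofReal, Real.mul_self_sqrt ht0]
    rw [← Complex.ofReal_add, ← Complex.ofReal_add]
    congr 1
    rw [htdef]; ring
  have hC : α₂ * (starRingEnd ℂ) α₂
      = a₁₂ * (starRingEnd ℂ) a₁₂ + a₁₅ * (starRingEnd ℂ) a₁₅ := by
    rw [Complex.mul_conj, Complex.mul_conj, Complex.mul_conj]
    rw [hα₂def, Complex.normSq_ofReal, hss]
    rw [← Complex.ofReal_add]
  have hD : β₁ * (starRingEnd ℂ) α₁ = b₉ * (starRingEnd ℂ) a₉ := by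
    by_cases hb : β₁ = 0
    · have hr_eq : r = 0 := by
        have : Real.sqrt r = 0 := by
          have := hb; rw [hβ₁def] at this; exact_mod_cast this
        nlinarith [Real.sq_sqrt hr0, Real.sqrt_nonneg r]
      have hb₉ : b₉ = 0 := by
        have : Complex.normSq b₉ = 0 := le_antisymm (hr_eq ▸ hb₉r) (Complex.normSq_nonneg _)
        exact Complex.normSq_eq_zero.mp this
      simp [hb, hb₉, hα₁def]
    · rw [hα₁def, if_neg hb]
      have hconjβ₁ : (starRingEnd ℂ) β₁ = β₁ := by rw [hβ₁def, Complex.conj_ofReal]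
      rw [map_div₀, _root_.map_mul, Complex.conj_conj, hconjβ₁]
      field_simp
  have hE : β₂ * (starRingEnd ℂ) α₂ = b₁₂ * (starRingEnd ℂ) a₁₂ := by
    by_cases hs : s = 0
    · have hA_eq : A = 0 := by
        nlinarith [hss, Real.sqrt_nonneg A]
      have ha₁₂ : a₁₂ = 0 := by
        have : Complex.normSq a₁₂ = 0 := by
          have := Complex.normSq_nonneg a₁₅
          have := Complex.normSq_nonneg a₁₂
          rw [hAdef] at hA_eq; linarith
        exact Complex.normSq_eq_zero.mp this
      simp [hβ₂def, hs, ha₁₂]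
    · rw [hβ₂def, if_neg hs, hα₂def, Complex.conj_ofReal]
      have hsC : (s : ℂ) ≠ 0 := by exact_mod_cast hs
      field_simp
  exact ⟨β₁ • E 0 1 + α₁ • E 1 0, β₂ • E 0 1 + α₂ • E 2 0, α₃ • E 1 0,
    supp_aux₁ β₁ α₁, supp_aux₂ β₂ α₂, supp_aux₃ α₃,
    fun ρ => key_lemma a₉ a₁₂ a₁₄ a₁₅ b₉ b₁₂ β₁ α₁ β₂ α₂ α₃ hA hB hC hD hE ρ⟩
end

section
/- Let a₈, a₁₀, a₁₃, a₁₄, b₈, b₁₀ ∈ ℂ and define the 3×3 matrices: M₁ = a₈·E₁₁ + b₈·E₃₂, M₂ = a₁₀·E₂₁ + b₁₀·E₃₂, M₃ = a₁₃·E₁₁, M₄ = a₁₄·E₂₁. Then there exist 3×3 complex mat600rices L₁, L₂, L₃, with L₁ supported on the entries (1,1) and (3,2), L₂ supported on the entries (2,1) and (3,2), and L₃ supported on the entry (1,1) (in particular all three are strictly incoherent Kraus operators), such that ∑ₖ₌₁⁴ Mₖ ρ Mₖ† = ∑ₖ₌₁³ Lₖ ρ Lₖ† for all ρ ∈ M₃(ℂ).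 -/
open Matrix

open Complex ComplexConjugate


lemma exists_coeffs (a₈ a₁₀ a₁₃ a₁₄ b₈ b₁₀ : ℂ) :
    ∃ α₁ β₁ α₂ β₂ γ : ℂ,
      (α₁ * conj α₁ + γ * conj γ = a₈ * conj a₈ + a₁₃ * conj a₁₃) ∧
      (α₁ * conj β₁ = a₈ * conj b₈) ∧
      (α₂ * conj α₂ = a₁₀ * conj a₁₀ + a₁₄ * conj a₁₄) ∧
      (α₂ * conj β₂ = a₁₀ * conj b₁₀) ∧
      (β₁ * conj β₁ + β₂ * conj β₂ = b₈ * conj b₈ + b₁₀ * conj b₁₀) := by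
  by_cases hz : a₁₀ = 0 ∧ a₁₄ = 0
  · exact ⟨a₈, b₈, 0, b₁₀, a₁₃, by ring, rfl, by simp [hz.1, hz.2], by simp [hz.1], by ring⟩
  · set s : ℝ := Complex.normSq a₁₀ + Complex.normSq a₁₄ with hs_def
    have hs0 : 0 < s := by
      rcases not_and_or.mp hz with h | h
      · have h1 := Complex.normSq_pos.mpr h
        have h2 := Complex.normSq_nonneg a₁₄
        simp only [hs_def]; linarith
      · have h1 := Complex.normSq_pos.mpr h
        have h2 := Complex.normSq_nonneg a₁₀
        simp only [hs_def]; linarith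
    set Sq : ℂ := ((Real.sqrt s : ℝ) : ℂ) with hSq_def
    have hSqconj : conj Sq = Sq := Complex.conj_ofReal _
    have hSq2 : Sq * Sq = (s : ℂ) := by
      rw [hSq_def]; norm_cast; exact Real.mul_self_sqrt hs0.le
    have hSqne : Sq ≠ 0 := by
      rw [hSq_def]
      exact_mod_cast Real.sqrt_ne_zero'.mpr hs0
    have hsC : (s : ℂ) = a₁₀ * conj a₁₀ + a₁₄ * conj a₁₄ := by
      rw [hs_def]; push_cast; rw [Complex.mul_conj, Complex.mul_conj]
    refine ?_
    -- common α₂ β₂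
    have h3 : Sq * conj Sq = a₁₀ * conj a₁₀ + a₁₄ * conj a₁₄ := by
      rw [hSqconj, hSq2, hsC]
    have h4 : Sq * conj (conj a₁₀ * b₁₀ / Sq) = a₁₀ * conj b₁₀ := by
      rw [map_div₀, _root_.map_mul, hSqconj, Complex.conj_conj]
      field_simp
    have hb2 : (conj a₁₀ * b₁₀ / Sq) * conj (conj a₁₀ * b₁₀ / Sq)
        = (a₁₀ * conj a₁₀) * (b₁₀ * conj b₁₀) / (s : ℂ) := by
      rw [map_div₀, _root_.map_mul, hSqconj, Complex.conj_conj]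
      rw [div_mul_div_comm, hSq2]
      ring_nf
    by_cases hb : b₈ = 0
    · -- α₁ = 0, β₁ = sqrt w, γ = sqrt (normSq a₈ + normSq a₁₃)
      refine ⟨0, ((Real.sqrt (Complex.normSq a₁₄ * Complex.normSq b₁₀ / s) : ℝ) : ℂ),
        Sq, conj a₁₀ * b₁₀ / Sq,
        ((Real.sqrt (Complex.normSq a₈ + Complex.normSq a₁₃) : ℝ) : ℂ), ?_, ?_, h3, h4, ?_⟩
      · rw [Complex.conj_ofReal]
        have : ((Real.sqrt (Complex.normSq a₈ + Complex.normSq a₁₃) : ℝ) : ℂ) *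
            ((Real.sqrt (Complex.normSq a₈ + Complex.normSq a₁₃) : ℝ) : ℂ)
            = ((Complex.normSq a₈ + Complex.normSq a₁₃ : ℝ) : ℂ) := by
          norm_cast
          exact Real.mul_self_sqrt
            (add_nonneg (Complex.normSq_nonneg _) (Complex.normSq_nonneg _))
        rw [zero_mul, zero_add, this]
        push_cast
        rw [Complex.mul_conj, Complex.mul_conj]
      · simp [hb]
      · rw [Complex.conj_ofReal, hb2]
        have : ((Real.sqrt (Complex.normSq a₁₄ * Complex.normSq b₁₀ / s) : ℝ) : ℂ) *
            ((Real.sqrt (Complex.normSq a₁₄ * Complex.normSq b₁₀ / s) : ℝ) : ℂ)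
            = ((Complex.normSq a₁₄ * Complex.normSq b₁₀ / s : ℝ) : ℂ) := by
          norm_cast
          exact Real.mul_self_sqrt (div_nonneg
            (mul_nonneg (Complex.normSq_nonneg _) (Complex.normSq_nonneg _)) hs0.le)
        rw [this, hb, Complex.mul_conj, Complex.mul_conj, Complex.mul_conj]
        have hsne : (s : ℂ) ≠ 0 := by exact_mod_cast hs0.ne'
        field_simp
        push_cast
        rw [hs_def]
        push_cast
        simp only [Complex.normSq_zero, Complex.ofReal_zero, mul_zero, add_zero]
        have hne : ((Complex.normSq a₁₀ : ℂ) + (Complex.normSq a₁₄ : ℂ)) ≠ 0 := by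
          rw [hs_def] at hs0; exact_mod_cast hs0.ne'
        field_simp
        ring
    · -- b₈ ≠ 0
      have hnb : 0 < Complex.normSq b₈ := Complex.normSq_pos.mpr hb
      set t : ℝ := 1 + Complex.normSq a₁₄ * Complex.normSq b₁₀ / (s * Complex.normSq b₈) with ht_def
      have ht1 : 1 ≤ t := by
        rw [ht_def]
        have : 0 ≤ Complex.normSq a₁₄ * Complex.normSq b₁₀ / (s * Complex.normSq b₈) :=
          div_nonneg (mul_nonneg (Complex.normSq_nonneg _) (Complex.normSq_nonneg _))
            (mul_pos hs0 hnb).le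
        linarith
      set u : ℝ := Real.sqrt t with hu_def
      have hu2 : u * u = t := Real.mul_self_sqrt (by linarith)
      have hu1 : 1 ≤ u := by
        rw [hu_def]; exact Real.one_le_sqrt.mpr ht1
      have hu0 : (0:ℝ) < u := by linarith
      have huC : ((u:ℝ):ℂ) ≠ 0 := by exact_mod_cast hu0.ne'
      set v : ℝ := Complex.normSq a₈ + Complex.normSq a₁₃ - Complex.normSq a₈ / (u * u)
        with hv_def
      have hv0 : 0 ≤ v := by
        rw [hv_def]
        have h1 : Complex.normSq a₈ / (u * u) ≤ Complex.normSq a₈ := by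
          apply div_le_self (Complex.normSq_nonneg a₈)
          nlinarith
        have := Complex.normSq_nonneg a₁₃
        linarith
      refine ⟨a₈ / ((u:ℝ):ℂ), ((u:ℝ):ℂ) * b₈, Sq, conj a₁₀ * b₁₀ / Sq,
        ((Real.sqrt v : ℝ) : ℂ), ?_, ?_, h3, h4, ?_⟩
      · rw [Complex.conj_ofReal, map_div₀, Complex.conj_ofReal]
        have hvv : ((Real.sqrt v : ℝ) : ℂ) * ((Real.sqrt v : ℝ) : ℂ) = ((v:ℝ):ℂ) := by
          norm_cast; exact Real.mul_self_sqrt hv0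
        rw [hvv]
        have h8 : a₈ * conj a₈ = ((Complex.normSq a₈ : ℝ) : ℂ) := Complex.mul_conj a₈
        have h13 : a₁₃ * conj a₁₃ = ((Complex.normSq a₁₃ : ℝ) : ℂ) := Complex.mul_conj a₁₃
        rw [div_mul_div_comm, h8]
        rw [h13]
        have huu : ((u:ℝ):ℂ) * ((u:ℝ):ℂ) = ((u*u : ℝ):ℂ) := by push_cast; ring
        rw [huu]
        rw [hv_def]
        push_cast
        have huuR : ((u*u:ℝ):ℂ) ≠ 0 := by
          push_cast
          exact mul_ne_zero (by exact_mod_cast hu0.ne') (by exact_mod_cast hu0.ne')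
        field_simp
        try ring
      · rw [_root_.map_mul, Complex.conj_ofReal]
        field_simp
      · rw [_root_.map_mul, Complex.conj_ofReal, hb2]
        have hsne : (s : ℂ) ≠ 0 := by exact_mod_cast hs0.ne'
        have hb8 : b₈ * conj b₈ = ((Complex.normSq b₈ : ℝ) : ℂ) := Complex.mul_conj b₈
        have hb10 : b₁₀ * conj b₁₀ = ((Complex.normSq b₁₀ : ℝ) : ℂ) := Complex.mul_conj b₁₀
        have ha10 : a₁₀ * conj a₁₀ = ((Complex.normSq a₁₀ : ℝ) : ℂ) := Complex.mul_conj a₁₀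
        have : ((u:ℝ):ℂ) * b₈ * (((u:ℝ):ℂ) * conj b₈) = ((u*u:ℝ):ℂ) * (b₈ * conj b₈) := by
          push_cast; ring
        rw [this, hb8, hb10, ha10, hu2, ht_def]
        have hnbne : (Complex.normSq b₈ : ℂ) ≠ 0 := by exact_mod_cast hnb.ne'
        push_cast
        field_simp
        norm_cast
        simp only [hs_def]
        ring



open ComplexConjugate

lemma formA (a b : ℂ) : a • E 0 0 + b • E 2 1 = !![a,0,0;0,0,0;0,b,0] := by
  ext p q; fin_cases p <;> fin_cases q <;>
    simp [E, Matrix.single, vecHead, vecTail]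
lemma formB (a b : ℂ) : a • E 1 0 + b • E 2 1 = !![0,0,0;a,0,0;0,b,0] := by
  ext p q; fin_cases p <;> fin_cases q <;>
    simp [E, Matrix.single, vecHead, vecTail]
lemma formC (a : ℂ) : a • E 0 0 = !![a,0,0;0,0,0;0,0,0] := by
  ext p q; fin_cases p <;> fin_cases q <;>
    simp [E, Matrix.single, vecHead, vecTail]
lemma formD (a : ℂ) : a • E 1 0 = !![0,0,0;a,0,0;0,0,0] := by
  ext p q; fin_cases p <;> fin_cases q <;>
    simp [E, Matrix.single, vecHead, vecTail]

lemma ctA (a b c d e f g h i : ℂ) :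
    (!![a,b,c;d,e,f;g,h,i])ᴴ = !![conj a, conj d, conj g; conj b, conj e, conj h; conj c, conj f, conj i] := by
  ext p q; fin_cases p <;> fin_cases q <;>
    simp [Matrix.conjTranspose_apply, vecHead, vecTail]

lemma key_s11 (a₈ a₁₀ a₁₃ a₁₄ b₈ b₁₀ α₁ β₁ α₂ β₂ γ : ℂ)
    (h1 : α₁ * conj α₁ + γ * conj γ = a₈ * conj a₈ + a₁₃ * conj a₁₃)
    (h2 : α₁ * conj β₁ = a₈ * conj b₈)
    (h3 : α₂ * conj α₂ = a₁₀ * conj a₁₀ + a₁₄ * conj a₁₄)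
    (h4 : α₂ * conj β₂ = a₁₀ * conj b₁₀)
    (h5 : β₁ * conj β₁ + β₂ * conj β₂ = b₈ * conj b₈ + b₁₀ * conj b₁₀)
    (ρ : Matrix (Fin 3) (Fin 3) ℂ) :
        (a₈ • E 0 0 + b₈ • E 2 1) * ρ * (a₈ • E 0 0 + b₈ • E 2 1)ᴴ +
        (a₁₀ • E 1 0 + b₁₀ • E 2 1) * ρ * (a₁₀ • E 1 0 + b₁₀ • E 2 1)ᴴ +
        (a₁₃ • E 0 0) * ρ * (a₁₃ • E 0 0)ᴴ +
        (a₁₄ • E 1 0) * ρ * (a₁₄ • E 1 0)ᴴ =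
        (α₁ • E 0 0 + β₁ • E 2 1) * ρ * (α₁ • E 0 0 + β₁ • E 2 1)ᴴ +
        (α₂ • E 1 0 + β₂ • E 2 1) * ρ * (α₂ • E 1 0 + β₂ • E 2 1)ᴴ +
        (γ • E 0 0) * ρ * (γ • E 0 0)ᴴ := by
  have h2c : β₁ * conj α₁ = b₈ * conj a₈ := by
    have := congrArg conj h2; simpa [mul_comm] using this
  have h4c : β₂ * conj α₂ = b₁₀ * conj a₁₀ := by
    have := congrArg conj h4; simpa [mul_comm] using this
  rw [formA a₈ b₈, formB a₁₀ b₁₀, formA α₁ β₁, formB α₂ β₂, formC a₁₃, formC γ,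
    formD a₁₄, eta_fin_three ρ]
  rw [ctA, ctA, ctA, ctA, ctA, ctA, ctA]
  simp only [Matrix.mul_fin_three, map_zero]
  ext i j
  fin_cases i <;> fin_cases j <;>
    simp [vecHead, vecTail] <;>
    first
      | linear_combination -ρ 0 0 * h1
      | linear_combination -ρ 0 1 * h2
      | linear_combination -ρ 0 0 * h3
      | linear_combination -ρ 0 1 * h4
      | linear_combination -ρ 1 0 * h2c
      | linear_combination -ρ 1 0 * h4c
      | linear_combination -ρ 1 1 * h5


theorem reduce_8_10_13_14 (a₈ a₁₀ a₁₃ a₁₄ b₈ b₁₀ : ℂ) :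
    ∃ L₁ L₂ L₃ : Matrix (Fin 3) (Fin 3) ℂ,
      SupportedOn L₁ {(0, 0), (2, 1)} ∧
      SupportedOn L₂ {(1, 0), (2, 1)} ∧
      SupportedOn L₃ {(0, 0)} ∧
      ∀ ρ : Matrix (Fin 3) (Fin 3) ℂ,
        (a₈ • E 0 0 + b₈ • E 2 1) * ρ * (a₈ • E 0 0 + b₈ • E 2 1)ᴴ +
        (a₁₀ • E 1 0 + b₁₀ • E 2 1) * ρ * (a₁₀ • E 1 0 + b₁₀ • E 2 1)ᴴ +
        (a₁₃ • E 0 0) * ρ * (a₁₃ • E 0 0)ᴴ +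
        (a₁₄ • E 1 0) * ρ * (a₁₄ • E 1 0)ᴴ =
        L₁ * ρ * L₁ᴴ + L₂ * ρ * L₂ᴴ + L₃ * ρ * L₃ᴴ := by
  obtain ⟨α₁, β₁, α₂, β₂, γ, h1, h2, h3, h4, h5⟩ :=
    exists_coeffs a₈ a₁₀ a₁₃ a₁₄ b₈ b₁₀
  refine ⟨α₁ • E 0 0 + β₁ • E 2 1, α₂ • E 1 0 + β₂ • E 2 1, γ • E 0 0, ?_, ?_, ?_,
    fun ρ => key_s11 a₈ a₁₀ a₁₃ a₁₄ b₈ b₁₀ α₁ β₁ α₂ β₂ γ h1 h2 h3 h4 h5 ρ⟩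
  · intro p q h
    rw [formA] at h
    fin_cases p <;> fin_cases q <;> simp [vecHead, vecTail] at h ⊢
  · intro p q h
    rw [formB] at h
    fin_cases p <;> fin_cases q <;> simp [vecHead, vecTail] at h ⊢
  · intro p q h
    rw [formC] at h
    fin_cases p <;> fin_cases q <;> simp [vecHead, vecTail] at h ⊢
end
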